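/- arXiv:2005.00126 — 6 statements merged into one kernel-verified Lean document; each statement's English description precedes it below -/
import Mathlib

section
/- With p_n(t,a;r) defined by p_0 = 1 and p_n = ∂_a p_{n-1} + p_{n-1}(t - rψ_0(a)) where ψ_0 = (log M_f)', the exponential generating function identity holds: e^{λs} (M_f(a)/M_f(a+λ))^r = Σ_{k=0}^∞ (λ^k/k!) p_k(s,a;r), for λ in a neighborhood of 0 where M_f is analytic and positive. -/
/-!
With `H b = exp (b s) / M b ^ r`, the logarithmic derivative of `H` is `s - r ψ₀`, so the
recursion for `p_n` is exactly the one satisfied by `H⁽ⁿ⁾ / H`; hence `H⁽ⁿ⁾ = H p_n`. The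
generating function is then the Taylor series of the analytic function `H` at `a`, divided
by `H a`.
-/

open Real
open scoped Nat ContDiff

theorem AnalyticAt.exists_hasSum_iteratedDeriv {𝕜 E : Type*} [NontriviallyNormedField 𝕜]
    [CharZero 𝕜] [NormedAddCommGroup E] [NormedSpace 𝕜 E] [CompleteSpace E] {f : 𝕜 → E} {x : 𝕜}
    (hf : AnalyticAt 𝕜 f x) :
    ∃ δ > 0, ∀ y : 𝕜, ‖y‖ < δ →
      HasSum (fun n : ℕ => (y ^ n / n !) • iteratedDeriv n f x) (f (x + y)) := by
  obtain ⟨q, R, hR⟩ := hf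
  obtain ⟨ε, hε0, hεR⟩ := exists_between hR.r_pos
  refine ⟨ε.toReal, ENNReal.toReal_pos hε0.ne' hεR.ne_top, fun y hy => ?_⟩
  have hy : y ∈ Metric.eball (0 : 𝕜) R := by
    rw [Metric.mem_eball, edist_zero_right, ← ofReal_norm]
    exact (ENNReal.ofReal_lt_iff_lt_toReal (norm_nonneg y) hεR.ne_top).2 hy |>.trans hεR
  convert hR.hasSum_iteratedFDeriv hy using 2 with n
  rw [iteratedFDeriv_apply_eq_iteratedDeriv_mul_prod, Finset.prod_const, Finset.card_univ,
    Fintype.card_fin, smul_smul, div_eq_inv_mul]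

theorem iteratedDeriv_eq_mul_of_logDeriv_recursion {𝕜 : Type*} [NontriviallyNormedField 𝕜]
    {f : 𝕜 → 𝕜} (hf : ContDiff 𝕜 ∞ f) (hf0 : ∀ x, f x ≠ 0) {q : ℕ → 𝕜 → 𝕜}
    (hq0 : ∀ x, q 0 x = 1)
    (hq : ∀ n x, q (n + 1) x = deriv (q n) x + q n x * logDeriv f x) (n : ℕ) (x : 𝕜) :
    iteratedDeriv n f x = f x * q n x := by
  induction n generalizing x with
  | zero => simp [hq0]
  | succ n ih =>
    have hqn : q n = fun y => iteratedDeriv n f y / f y := by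
      ext y; rw [ih, mul_div_cancel_left₀ _ (hf0 y)]
    have hderiv : HasDerivAt (iteratedDeriv n f) (iteratedDeriv (n + 1) f x) x := by
      rw [iteratedDeriv_succ]
      exact (hf.differentiable_iteratedDeriv n (mod_cast WithTop.coe_lt_top _) x).hasDerivAt
    have hfx : HasDerivAt f (deriv f x) x :=
      (hf.differentiable (by simp) x).hasDerivAt
    rw [hq, hqn, (hderiv.fun_div hfx (hf0 x)).deriv, logDeriv_apply]
    field_simp [hf0 x]
    ring

theorem Real.logDeriv_exp_comp {g : ℝ → ℝ} {x : ℝ} (hg : DifferentiableAt ℝ g x) :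
    logDeriv (fun y => exp (g y)) x = deriv g x := by
  rw [← Function.comp_def, logDeriv_comp differentiableAt_exp hg, Real.logDeriv_exp,
    Pi.one_apply, one_mul]

theorem stmt_6
    (M : ℝ → ℝ) (hpos : ∀ a, 0 < M a)
    (hanal : ∀ a, AnalyticAt ℝ M a)
    (r : ℕ) (p : ℕ → ℝ → ℝ → ℝ)
    (hp0 : ∀ t a, p 0 t a = 1)
    (hprec : ∀ n t a, p (n + 1) t a =
      deriv (fun b => p n t b) a
        + p n t a * (t - r * deriv (fun b => Real.log (M b)) a)) :
    ∀ (s a : ℝ), ∃ δ > 0, ∀ l : ℝ, |l| < δ →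
      HasSum (fun k : ℕ => l ^ k / (k.factorial : ℝ) * p k s a)
        (Real.exp (l * s) * (M a / M (a + l)) ^ r) := by
  intro s a
  set H : ℝ → ℝ := fun b => exp (b * s - r * log (M b)) with hH
  have hlogM : ∀ b, AnalyticAt ℝ (fun b => log (M b)) b := fun b => (hanal b).log (hpos b)
  have hH_analytic : ∀ b, AnalyticAt ℝ H b := fun b => by
    have hlogM_b := hlogM b
    fun_prop
  have hH_logDeriv : ∀ b, logDeriv H b = s - r * deriv (fun b => log (M b)) b := fun b => by
    have hlogM_diff := (hlogM b).differentiableAt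
    rw [hH, logDeriv_exp_comp (by fun_prop),
      ((hasDerivAt_mul_const s).fun_sub (hlogM_diff.hasDerivAt.const_mul (r : ℝ))).deriv]
  have hH_iteratedDeriv : ∀ n b, iteratedDeriv n H b = H b * p n s b :=
    iteratedDeriv_eq_mul_of_logDeriv_recursion (AnalyticOnNhd.contDiff fun b _ => hH_analytic b)
      (fun b => (exp_pos _).ne') (hp0 s) (fun n b => by rw [hprec, hH_logDeriv])
  have hH_ratio : ∀ l, H (a + l) / H a = exp (l * s) * (M a / M (a + l)) ^ r := fun l => by
    rw [hH, ← exp_sub, ← exp_log (div_pos (hpos a) (hpos (a + l))), ← exp_nat_mul, ← exp_add,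
      log_div (hpos a).ne' (hpos (a + l)).ne']
    ring_nf
  obtain ⟨δ, hδ, hsum⟩ := (hH_analytic a).exists_hasSum_iteratedDeriv
  refine ⟨δ, hδ, fun l hl => ?_⟩
  rw [← hH_ratio]
  refine ((hsum l (by rwa [norm_eq_abs])).div_const (H a)).congr_fun fun k => ?_
  rw [hH_iteratedDeriv, smul_eq_mul, mul_div_assoc, mul_div_cancel_left₀ _ (exp_pos _).ne']
end

section
/- Let h_a(t) be the density of T = Σ_{k=1}^r log X_k where X_k are independent with densities M_{f_k}(a)^{-1} x^{a-1} f_k(x). Then ∂/∂a log h_a(t) = t - E^a[T], and consequently, for a_0 < a_1 in the common domain, sup_{a ∈ [a_0,a_1]} h_a(t) ≤ h_{a_0}(t) + C h_{a_1}(t) for all t ∈ ℝ, where C = exp((a_1 - a_0)(E^{a_1}[T] - E^{a_0}[T])). -/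
open MeasureTheory Set

theorem stmt_9
    (r : ℕ) (M : Fin r → ℝ → ℝ)
    (hMs : ∀ k, ContDiff ℝ (⊤ : ℕ∞) (M k)) (hMpos : ∀ k b, 0 < M k b)
    (g : ℝ → ℝ) (hg : ∀ t, 0 ≤ g t)
    (h : ℝ → ℝ → ℝ)
    (hh : ∀ b t, h b t = Real.exp (b * t) / (∏ k, M k b) * g t)
    (ET : ℝ → ℝ) (hET : ∀ b, ET b = ∑ k, deriv (fun c => Real.log (M k c)) b)
    (hmono : StrictMono ET)
    (a₀ a₁ : ℝ) (h01 : a₀ < a₁) :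
    (∀ a t, 0 < g t → deriv (fun b => Real.log (h b t)) a = t - ET a) ∧
    (∀ t, ∀ a ∈ Icc a₀ a₁,
      h a t ≤ h a₀ t + Real.exp ((a₁ - a₀) * (ET a₁ - ET a₀)) * h a₁ t) := by
  set L : ℝ → ℝ := fun b => ∑ k, Real.log (M k b) with hLdef
  have hMd : ∀ k (b : ℝ), DifferentiableAt ℝ (fun c => Real.log (M k c)) b := by
    intro k b
    exact (Real.differentiableAt_log (hMpos k b).ne').comp b
      (((hMs k).differentiable (by simp)).differentiableAt)
  have hL : ∀ b, HasDerivAt L (ET b) b := by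
    intro b
    rw [hET]
    exact HasDerivAt.fun_sum (fun k _ => (hMd k b).hasDerivAt)
  have hexpL : ∀ b, Real.exp (L b) = ∏ k, M k b := by
    intro b
    rw [hLdef, Real.exp_sum]
    exact Finset.prod_congr rfl fun k _ => Real.exp_log (hMpos k b)
  have hprodpos : ∀ b, 0 < ∏ k, M k b := fun b => Finset.prod_pos fun k _ => hMpos k b
  have hh' : ∀ b t, h b t = Real.exp (b * t - L b) * g t := by
    intro b t
    rw [hh, Real.exp_sub, hexpL]
  constructor
  · intro a t hgt
    have heq : (fun b => Real.log (h b t)) =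
        fun b => b * t - L b + Real.log (g t) := by
      funext b
      rw [hh' b t, Real.log_mul (Real.exp_ne_zero _) hgt.ne', Real.log_exp]
    rw [heq]
    have hd : HasDerivAt (fun b => b * t - L b + Real.log (g t)) (t - ET a) a :=
      ((hasDerivAt_mul_const t).sub (hL a)).add_const _
    exact hd.deriv
  · intro t a ⟨ha0, ha1⟩
    rcases eq_or_lt_of_le (hg t) with hg0 | hgt
    · simp only [hh', ← hg0, mul_zero]
      norm_num
    have hCpos : (0:ℝ) < Real.exp ((a₁ - a₀) * (ET a₁ - ET a₀)) := Real.exp_pos _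
    have hhnn : ∀ b, 0 ≤ h b t := fun b => by
      rw [hh']; positivity
    by_cases hle : h a t ≤ h a₀ t
    · nlinarith [hhnn a₁]
    push_neg at hle
    -- φ a > φ a₀ where φ b = b * t - L b
    have hphi : a₀ * t - L a₀ < a * t - L a := by
      rw [hh' a t, hh' a₀ t] at hle
      have := lt_of_mul_lt_mul_right hle hgt.le
      exact Real.exp_lt_exp.mp this
    have haa0 : a₀ < a := by
      rcases eq_or_lt_of_le ha0 with rfl | hlt
      · exact absurd hphi (lt_irrefl _)
      · exact hlt
    -- MVT on [a₀, a]
    obtain ⟨c, hc, hcval⟩ := exists_hasDerivAt_eq_slope L ET haa0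
      (fun x _ => (hL x).continuousAt.continuousWithinAt)
      (fun x _ => hL x)
    have hLc : L a - L a₀ = ET c * (a - a₀) := by
      rw [hcval, div_mul_cancel₀ _ (sub_ne_zero.mpr haa0.ne')]
    have htc : ET c < t := by
      nlinarith [sub_pos.mpr haa0]
    have ht0 : ET a₀ < t := lt_trans (hmono hc.1) htc
    have hET01 : ET a₀ < ET a₁ := hmono h01
    -- bound φ a - φ a₁ ≤ (a₁ - a₀)(ET a₁ - ET a₀)
    have hkey : a * t - L a - (a₁ * t - L a₁) ≤ (a₁ - a₀) * (ET a₁ - ET a₀) := by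
      rcases eq_or_lt_of_le ha1 with rfl | haa1
      · nlinarith
      obtain ⟨d, hd, hdval⟩ := exists_hasDerivAt_eq_slope L ET haa1
        (fun x _ => (hL x).continuousAt.continuousWithinAt)
        (fun x _ => hL x)
      have hLd : L a₁ - L a = ET d * (a₁ - a) := by
        rw [hdval, div_mul_cancel₀ _ (sub_ne_zero.mpr haa1.ne')]
      have hd1 : ET d < ET a₁ := hmono hd.2
      have hd0 : ET a₀ < ET d := hmono (lt_of_le_of_lt ha0 hd.1)
      nlinarith [sub_pos.mpr haa1, sub_nonneg.mpr ha0, sub_pos.mpr h01]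
    have : h a t ≤ Real.exp ((a₁ - a₀) * (ET a₁ - ET a₀)) * h a₁ t := by
      rw [hh' a t, hh' a₁ t, ← mul_assoc, ← Real.exp_add]
      apply mul_le_mul_of_nonneg_right _ (hg t)
      exact Real.exp_le_exp.mpr (by linarith)
    linarith [hhnn a₀]
end

section
/- Let F(a,x) = M_f(a)^{-1} ∫₀^x y^{a-1} f(y) dy be the cdf of the Mellin family and H(a,·) its inverse on (0,1). Then ∂/∂a log H(a,p) = L^f(a, H(a,p)), where L^f(a,x) := (x^a f(x))^{-1} ∫₀^x y^{a-1}(ψ_0(a) − log y) f(y) dy and ψ_0 = (log M_f)'. -/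
open MeasureTheory Set

open Topology Filter

/-- The Mellin transform `M_f(a) = ∫₀^∞ x^{a-1} f(x) dx`. -/
noncomputable def Mf (f : ℝ → ℝ) (a : ℝ) : ℝ := ∫ x in Ioi (0:ℝ), x ^ (a - 1) * f x

lemma rpow_le_add (y r1 r2 s : ℝ) (hy : 0 < y) (h1 : r1 ≤ s) (h2 : s ≤ r2) :
    y ^ s ≤ y ^ r1 + y ^ r2 := by
  rcases le_total 1 y with h | h
  · calc y ^ s ≤ y ^ r2 := Real.rpow_le_rpow_of_exponent_le h h2
      _ ≤ y ^ r1 + y ^ r2 := le_add_of_nonneg_left (Real.rpow_nonneg hy.le _)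
  · calc y ^ s ≤ y ^ r1 := Real.rpow_le_rpow_of_exponent_ge hy h h1
      _ ≤ y ^ r1 + y ^ r2 := le_add_of_nonneg_right (Real.rpow_nonneg hy.le _)

lemma abs_log_le (y δ : ℝ) (hy : 0 < y) (hδ : 0 < δ) :
    |Real.log y| ≤ (y ^ δ + y ^ (-δ)) / δ := by
  rw [le_div_iff₀ hδ]
  rcases le_total 0 (Real.log y) with h | h
  · rw [abs_of_nonneg h]
    calc Real.log y * δ = Real.log (y ^ δ) := by rw [Real.log_rpow hy]; ring
      _ ≤ y ^ δ := Real.log_le_self (Real.rpow_nonneg hy.le _)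
      _ ≤ y ^ δ + y ^ (-δ) := le_add_of_nonneg_right (Real.rpow_nonneg hy.le _)
  · rw [abs_of_nonpos h, neg_mul]
    calc -(Real.log y * δ) = Real.log (y ^ (-δ)) := by rw [Real.log_rpow hy]; ring
      _ ≤ y ^ (-δ) := Real.log_le_self (Real.rpow_nonneg hy.le _)
      _ ≤ y ^ δ + y ^ (-δ) := le_add_of_nonneg_left (Real.rpow_nonneg hy.le _)

-- d/dc of c ↦ y ^ (c-1) for y > 0
lemma hasDerivAt_rpow_param (y c : ℝ) (hy : 0 < y) :
    HasDerivAt (fun c : ℝ => y ^ (c - 1)) (y ^ (c - 1) * Real.log y) c := by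
  have h : ∀ c : ℝ, y ^ (c - 1) = Real.exp ((c - 1) * Real.log y) := fun c => by
    rw [Real.rpow_def_of_pos hy, mul_comm]
  simp only [h]
  have : HasDerivAt (fun c : ℝ => (c - 1) * Real.log y) (Real.log y) c := by
    simpa using ((hasDerivAt_id c).sub_const 1).mul_const (Real.log y)
  simpa using this.exp

set_option maxHeartbeats 1000000 in
lemma measurable_rpow_c (c : ℝ) : Measurable fun y : ℝ => y ^ c := by measurability

set_option maxHeartbeats 2000000 in
lemma key_deriv (f : ℝ → ℝ) (I : Set ℝ) (hI : IsOpen I) (a : ℝ) (ha : a ∈ I)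
    (hf0 : ∀ x ∈ Ioi (0:ℝ), 0 ≤ f x)
    (hInt : ∀ b ∈ I, IntegrableOn (fun x => x ^ (b - 1) * f x) (Ioi (0:ℝ)))
    (T : Set ℝ) (hT : T ⊆ Ioi (0:ℝ)) (hTm : MeasurableSet T) :
    IntegrableOn (fun y => y ^ (a - 1) * Real.log y * f y) T ∧
    HasDerivAt (fun c => ∫ y in T, y ^ (c - 1) * f y)
      (∫ y in T, y ^ (a - 1) * Real.log y * f y) a := by
  obtain ⟨ε0, hε0, hball⟩ := Metric.isOpen_iff.1 hI a ha
  set ε := ε0 / 3 with hεdef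
  have hε : 0 < ε := by positivity
  have hmem : ∀ c : ℝ, |c - a| ≤ 2 * ε → c ∈ I := fun c hc => by
    apply hball; rw [Metric.mem_ball, Real.dist_eq]
    calc |c - a| ≤ 2 * ε := hc
      _ < ε0 := by rw [hεdef]; linarith
  have hrest : volume.restrict T ≤ volume.restrict (Ioi (0:ℝ)) :=
    Measure.restrict_mono hT le_rfl
  -- measurability of f on Ioi 0
  have hfm : AEStronglyMeasurable f (volume.restrict (Ioi (0:ℝ))) := by
    have h1 : AEStronglyMeasurable (fun y : ℝ => y ^ (1 - a) * (y ^ (a - 1) * f y))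
        (volume.restrict (Ioi (0:ℝ))) :=
      ((measurable_rpow_c (1 - a)).aestronglyMeasurable).mul (hInt a ha).aestronglyMeasurable
    refine h1.congr ?_
    filter_upwards [ae_restrict_mem measurableSet_Ioi] with y hy
    have : y ^ (1 - a) * y ^ (a - 1) = 1 := by
      rw [← Real.rpow_add hy]; norm_num
    rw [← mul_assoc, this, one_mul]
  have hfmT : AEStronglyMeasurable f (volume.restrict T) := hfm.mono_measure hrest
  have hrpow : ∀ c : ℝ, AEStronglyMeasurable (fun y : ℝ => y ^ (c - 1))
      (volume.restrict T) := fun c => (measurable_rpow_c (c - 1)).aestronglyMeasurable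
  have hlogm : AEStronglyMeasurable (fun y : ℝ => y ^ (a - 1) * Real.log y)
      (volume.restrict T) :=
    ((measurable_rpow_c (a - 1)).mul Real.measurable_log).aestronglyMeasurable
  have hbound_int : Integrable
      (fun y : ℝ => (2 / ε) * (y ^ (a - 2 * ε - 1) * f y + y ^ (a + 2 * ε - 1) * f y))
      (volume.restrict T) := by
    refine Integrable.const_mul ?_ _
    refine Integrable.add ?_ ?_
    · have := (hInt (a - 2 * ε) (hmem _ (by rw [abs_of_nonpos (by linarith)]; simp))).mono_set hT
      simpa [sub_right_comm] using this.integrable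
    · have := (hInt (a + 2 * ε) (hmem _ (by rw [abs_of_nonneg (by linarith)]; simp))).mono_set hT
      simpa [add_sub_right_comm] using this.integrable
  have h_bound : ∀ᵐ y ∂(volume.restrict T), ∀ c ∈ Metric.ball a ε,
      ‖y ^ (c - 1) * Real.log y * f y‖
        ≤ (2 / ε) * (y ^ (a - 2 * ε - 1) * f y + y ^ (a + 2 * ε - 1) * f y) := by
    filter_upwards [ae_restrict_mem hTm] with y hyT c hc
    have hy : (0:ℝ) < y := hT hyT
    have hfy : 0 ≤ f y := hf0 y hy
    have hc' : |c - a| < ε := by rwa [Metric.mem_ball, Real.dist_eq] at hc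
    have hca := abs_sub_lt_iff.1 hc'
    have hnorm : ‖y ^ (c - 1) * Real.log y * f y‖ = y ^ (c - 1) * |Real.log y| * f y := by
      rw [Real.norm_eq_abs, abs_mul, abs_mul, abs_of_nonneg (Real.rpow_nonneg hy.le _),
        abs_of_nonneg hfy]
    rw [hnorm]
    have step1 : y ^ (c - 1) * |Real.log y| * f y
        ≤ y ^ (c - 1) * ((y ^ ε + y ^ (-ε)) / ε) * f y := by
      have h1 := abs_log_le y ε hy hε
      have h0 : (0:ℝ) ≤ y ^ (c - 1) := Real.rpow_nonneg hy.le _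
      nlinarith [mul_le_mul_of_nonneg_left h1 h0]
    refine step1.trans ?_
    have e1 : y ^ (c - 1) * ((y ^ ε + y ^ (-ε)) / ε)
        = (1 / ε) * (y ^ (c - 1 + ε) + y ^ (c - 1 + -ε)) := by
      rw [Real.rpow_add hy, Real.rpow_add hy]; field_simp
    rw [e1]
    have b1 : y ^ (c - 1 + ε) ≤ y ^ (a - 2 * ε - 1) + y ^ (a + 2 * ε - 1) :=
      rpow_le_add y _ _ _ hy (by linarith [hca.1, hca.2]) (by linarith [hca.1, hca.2])
    have b2 : y ^ (c - 1 + -ε) ≤ y ^ (a - 2 * ε - 1) + y ^ (a + 2 * ε - 1) :=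
      rpow_le_add y _ _ _ hy (by linarith [hca.1, hca.2]) (by linarith [hca.1, hca.2])
    have h1e : (0:ℝ) ≤ 1 / ε := by positivity
    calc 1 / ε * (y ^ (c - 1 + ε) + y ^ (c - 1 + -ε)) * f y
        ≤ 1 / ε * ((y ^ (a - 2 * ε - 1) + y ^ (a + 2 * ε - 1))
            + (y ^ (a - 2 * ε - 1) + y ^ (a + 2 * ε - 1))) * f y :=
          mul_le_mul_of_nonneg_right (mul_le_mul_of_nonneg_left (add_le_add b1 b2) h1e) hfy
      _ = 2 / ε * (y ^ (a - 2 * ε - 1) * f y + y ^ (a + 2 * ε - 1) * f y) := by ring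
  have h_diff : ∀ᵐ y ∂(volume.restrict T), ∀ c ∈ Metric.ball a ε,
      HasDerivAt (fun c => y ^ (c - 1) * f y) (y ^ (c - 1) * Real.log y * f y) c := by
    filter_upwards [ae_restrict_mem hTm] with y hyT c _
    have hy : (0:ℝ) < y := hT hyT
    simpa [mul_assoc] using (hasDerivAt_rpow_param y c hy).mul_const (f y)
  exact hasDerivAt_integral_of_dominated_loc_of_deriv_le (Metric.ball_mem_nhds a hε)
    (Filter.Eventually.of_forall fun c => (hrpow c).mul hfmT)
    ((hInt a ha).mono_set hT) (hlogm.mul hfmT) h_bound hbound_int h_diff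

lemma aesm_f (f : ℝ → ℝ) (a : ℝ)
    (hInta : IntegrableOn (fun x => x ^ (a - 1) * f x) (Ioi (0:ℝ))) :
    AEStronglyMeasurable f (volume.restrict (Ioi (0:ℝ))) := by
  have h1 : AEStronglyMeasurable (fun y : ℝ => y ^ (1 - a) * (y ^ (a - 1) * f y))
      (volume.restrict (Ioi (0:ℝ))) :=
    ((measurable_rpow_c (1 - a)).aestronglyMeasurable).mul hInta.aestronglyMeasurable
  refine h1.congr ?_
  filter_upwards [ae_restrict_mem measurableSet_Ioi] with y hy
  have : y ^ (1 - a) * y ^ (a - 1) = 1 := by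
    rw [← Real.rpow_add hy]; norm_num
  rw [← mul_assoc, this, one_mul]

theorem stmt_10
    (f : ℝ → ℝ) (S : Set ℝ) (hS : IsOpen S) (hSsub : S ⊆ Ioi (0:ℝ))
    (hSupp : ∀ x, x ∈ S ↔ (0 < x ∧ f x ≠ 0))
    (hf0 : ∀ x ∈ Ioi (0:ℝ), 0 ≤ f x)
    (hfs : ContDiffOn ℝ (⊤ : ℕ∞) f S)
    (I : Set ℝ) (hI : IsOpen I) (a : ℝ) (ha : a ∈ I)
    (hInt : ∀ b ∈ I, IntegrableOn (fun x => x ^ (b - 1) * f x) (Ioi (0:ℝ)))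
    (hpos : ∀ b ∈ I, 0 < Mf f b)
    (F : ℝ → ℝ → ℝ)
    (hF : ∀ b x, F b x = (Mf f b)⁻¹ * ∫ y in Ioo (0:ℝ) x, y ^ (b - 1) * f y)
    (H : ℝ → ℝ → ℝ)
    (hH1 : ∀ b ∈ I, ∀ x ∈ S, H b (F b x) = x)
    (hH2 : ∀ b ∈ I, ∀ q ∈ Ioo (0:ℝ) 1, H b q ∈ S ∧ F b (H b q) = q)
    (L : ℝ → ℝ → ℝ)
    (hL : ∀ b x, L b x = (x ^ b * f x)⁻¹ *
      ∫ y in Ioo (0:ℝ) x,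
        y ^ (b - 1) * (deriv (fun c => Real.log (Mf f c)) b - Real.log y) * f y) :
    ∀ q ∈ Ioo (0:ℝ) 1, deriv (fun b => Real.log (H b q)) a = L a (H a q) := by
  intro q hq
  -- basic objects
  set J : ℝ → ℝ → ℝ := fun b x => ∫ y in Ioo (0:ℝ) x, y ^ (b - 1) * f y with hJdef
  set φ : ℝ → ℝ := fun b => H b q with hφdef
  have hx0S : φ a ∈ S := (hH2 a ha q hq).1
  set x0 : ℝ := φ a with hx0def
  have hFx0 : F a x0 = q := (hH2 a ha q hq).2
  have hx0pos : 0 < x0 := ((hSupp x0).1 hx0S).1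
  have hfx0pos : 0 < f x0 :=
    lt_of_le_of_ne (hf0 x0 (hSsub hx0S)) (Ne.symm ((hSupp x0).1 hx0S).2)
  have hMa : 0 < Mf f a := hpos a ha
  have fpos : ∀ y ∈ S, 0 < f y := fun y hy =>
    lt_of_le_of_ne (hf0 y (hSsub hy)) (Ne.symm ((hSupp y).1 hy).2)
  have contf : ContinuousOn f S := hfs.continuousOn
  -- derivative of the Mellin transform
  have hM := key_deriv f I hI a ha hf0 hInt (Ioi 0) le_rfl measurableSet_Ioi
  set M' : ℝ := ∫ y in Ioi (0:ℝ), y ^ (a - 1) * Real.log y * f y with hM'def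
  have hMderiv : HasDerivAt (Mf f) M' a := hM.2
  have hψ : deriv (fun c => Real.log (Mf f c)) a = M' / Mf f a :=
    (hMderiv.log (ne_of_gt hMa)).deriv
  -- derivative of J in the parameter
  have hJb : ∀ x : ℝ,
      IntegrableOn (fun y => y ^ (a - 1) * Real.log y * f y) (Ioo 0 x) ∧
      HasDerivAt (fun c => J c x) (∫ y in Ioo (0:ℝ) x, y ^ (a - 1) * Real.log y * f y) a :=
    fun x => key_deriv f I hI a ha hf0 hInt (Ioo 0 x)
      (fun y hy => hy.1) measurableSet_Ioo
  set K : ℝ → ℝ := fun x => ∫ y in Ioo (0:ℝ) x, y ^ (a - 1) * Real.log y * f y with hKdef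
  -- neighborhood of x0 inside S
  obtain ⟨δ0, hδ0, hballS⟩ := Metric.isOpen_iff.1 hS x0 hx0S
  set δ : ℝ := min (δ0 / 2) (x0 / 2) with hδdef
  have hδpos : 0 < δ := by positivity
  have hδS : Ioo (x0 - δ) (x0 + δ) ⊆ S := by
    intro y hy
    apply hballS
    rw [Metric.mem_ball, Real.dist_eq, abs_sub_lt_iff]
    have h1 : δ ≤ δ0 / 2 := min_le_left _ _
    constructor <;> [linarith [hy.2]; linarith [hy.1]]
  have hupos : 0 < x0 - δ := by
    have : δ ≤ x0 / 2 := min_le_right _ _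
    linarith
  -- interval-integral facts
  have hII : ∀ b ∈ I, ∀ p r : ℝ, 0 ≤ p → p ≤ r →
      IntervalIntegrable (fun y => y ^ (b - 1) * f y) volume p r := by
    intro b hb p r hp hpr
    rw [intervalIntegrable_iff, uIoc_of_le hpr]
    exact (hInt b hb).mono_set (fun y hy => lt_of_le_of_lt hp hy.1)
  have hJeq : ∀ b, ∀ x : ℝ, 0 < x →
      J b x = ∫ y in (0:ℝ)..x, y ^ (b - 1) * f y := by
    intro b x hx
    simp only [hJdef]
    rw [intervalIntegral.integral_of_le hx.le, integral_Ioc_eq_integral_Ioo]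
  -- x-derivative of J for parameters in I, at points of Ioo (x0 - δ) (x0 + δ)
  have hJx : ∀ b ∈ I, ∀ x ∈ Ioo (x0 - δ) (x0 + δ),
      HasDerivAt (fun x => J b x) (x ^ (b - 1) * f x) x := by
    intro b hb x hx
    have hxS : x ∈ S := hδS hx
    have hxpos : (0:ℝ) < x := hSsub hxS
    have hmeasAt : StronglyMeasurableAtFilter (fun y => y ^ (b - 1) * f y) (𝓝 x) volume :=
      ⟨Ioi 0, Ioi_mem_nhds hxpos,
        ((measurable_rpow_c (b - 1)).aestronglyMeasurable).mul (aesm_f f a (hInt a ha))⟩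
    have hcont : ContinuousAt (fun y => y ^ (b - 1) * f y) x :=
      (Real.continuousAt_rpow_const x _ (Or.inl (ne_of_gt hxpos))).mul
        (contf.continuousAt (hS.mem_nhds hxS))
    have h1 := intervalIntegral.integral_hasDerivAt_right
      (hII b hb 0 x le_rfl hxpos.le) hmeasAt hcont
    refine HasDerivAt.congr_of_eventuallyEq h1 ?_
    filter_upwards [Ioi_mem_nhds hxpos] with z hz
    exact hJeq b z hz
  -- monotonicity of J
  have hJmono : ∀ b ∈ I, ∀ x1 x2 : ℝ, 0 < x1 → x1 ≤ x2 → J b x1 ≤ J b x2 := by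
    intro b hb x1 x2 h1 h12
    refine setIntegral_mono_set ((hInt b hb).mono_set (fun y hy => hy.1)) ?_ ?_
    · filter_upwards [ae_restrict_mem measurableSet_Ioo] with y hy
      exact mul_nonneg (Real.rpow_nonneg hy.1.le _) (hf0 y hy.1)
    · exact HasSubset.Subset.eventuallyLE (Ioo_subset_Ioo le_rfl h12)
  -- strict monotonicity inside the window
  have hJstrict : ∀ b ∈ I, ∀ x1 x2 : ℝ, x0 - δ ≤ x1 → x1 < x2 → x2 ≤ x0 + δ →
      J b x1 < J b x2 := by
    intro b hb x1 x2 hl h12 hr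
    have hx1pos : 0 < x1 := lt_of_lt_of_le hupos hl
    have hx2pos : 0 < x2 := lt_trans hx1pos h12
    have hkey : J b x2 - J b x1 = ∫ y in x1..x2, y ^ (b - 1) * f y := by
      rw [hJeq b x1 hx1pos, hJeq b x2 hx2pos,
        ← intervalIntegral.integral_add_adjacent_intervals
          (hII b hb 0 x1 le_rfl hx1pos.le) (hII b hb x1 x2 hx1pos.le h12.le)]
      ring
    have hpos2 : 0 < ∫ y in x1..x2, y ^ (b - 1) * f y := by
      refine intervalIntegral.intervalIntegral_pos_of_pos_on
        (hII b hb x1 x2 hx1pos.le h12.le) (fun y hy => ?_) h12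
      have hyS : y ∈ S := hδS ⟨lt_of_le_of_lt hl hy.1, lt_of_lt_of_le hy.2 hr⟩
      exact mul_pos (Real.rpow_pos_of_pos (lt_trans hx1pos hy.1) _) (fpos y hyS)
    linarith
  -- continuity of b ↦ F b y at a for fixed y > 0
  have hFbcont : ∀ y : ℝ, 0 < y → ContinuousAt (fun b => F b y) a := by
    intro y _
    have h1 : ContinuousAt (fun b => (Mf f b)⁻¹ * J b y) a :=
      ((hMderiv.continuousAt).inv₀ (ne_of_gt hMa)).mul (hJb y).2.continuousAt
    have he : (fun b => F b y) = fun b => (Mf f b)⁻¹ * J b y := funext fun b => hF b y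
    rw [he]; exact h1
  -- continuity of φ at a
  have hφcont : Filter.Tendsto φ (𝓝 a) (𝓝 x0) := by
    rw [Metric.tendsto_nhds]
    intro ε hε
    set ε' : ℝ := min (ε / 2) (δ / 2) with hε'def
    have hε'pos : 0 < ε' := by positivity
    have hε'δ : ε' < δ := lt_of_le_of_lt (min_le_right _ _) (by linarith)
    have hε'ε : ε' < ε := lt_of_le_of_lt (min_le_left _ _) (by linarith)
    have hy1pos : 0 < x0 - ε' := by linarith
    have h1 : F a (x0 - ε') < q := by
      rw [hF a (x0 - ε'), ← hFx0, hF a x0]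
      exact mul_lt_mul_of_pos_left
        (hJstrict a ha (x0 - ε') x0 (by linarith) (by linarith) (by linarith))
        (inv_pos.2 hMa)
    have h2 : q < F a (x0 + ε') := by
      rw [hF a (x0 + ε'), ← hFx0, hF a x0]
      exact mul_lt_mul_of_pos_left
        (hJstrict a ha x0 (x0 + ε') (by linarith) (by linarith) (by linarith))
        (inv_pos.2 hMa)
    have e1 : ∀ᶠ b in 𝓝 a, F b (x0 - ε') < q :=
      (hFbcont (x0 - ε') hy1pos).eventually_lt_const h1
    have e2 : ∀ᶠ b in 𝓝 a, q < F b (x0 + ε') :=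
      (hFbcont (x0 + ε') (by linarith)).eventually_const_lt h2
    filter_upwards [e1, e2, hI.mem_nhds ha] with b hb1 hb2 hbI
    have hφS : φ b ∈ S := (hH2 b hbI q hq).1
    have hφq : F b (φ b) = q := (hH2 b hbI q hq).2
    have hφpos : 0 < φ b := ((hSupp _).1 hφS).1
    rw [Real.dist_eq, abs_sub_lt_iff]
    constructor
    · by_contra hcon
      push_neg at hcon
      have hle : x0 + ε' ≤ φ b := by linarith
      have hmono : F b (x0 + ε') ≤ F b (φ b) := by
        rw [hF b (x0 + ε'), hF b (φ b)]
        exact mul_le_mul_of_nonneg_left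
          (hJmono b hbI (x0 + ε') (φ b) (by linarith) hle)
          (inv_nonneg.2 (hpos b hbI).le)
      rw [hφq] at hmono
      linarith
    · by_contra hcon
      push_neg at hcon
      have hle : φ b ≤ x0 - ε' := by linarith
      have hmono : F b (φ b) ≤ F b (x0 - ε') := by
        rw [hF b (x0 - ε'), hF b (φ b)]
        exact mul_le_mul_of_nonneg_left
          (hJmono b hbI (φ b) (x0 - ε') hφpos hle)
          (inv_nonneg.2 (hpos b hbI).le)
      rw [hφq] at hmono
      linarith
  -- x-derivative of F
  have hFx : ∀ b ∈ I, ∀ x ∈ Ioo (x0 - δ) (x0 + δ),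
      HasDerivAt (fun x => F b x) ((Mf f b)⁻¹ * (x ^ (b - 1) * f x)) x := by
    intro b hb x hx
    have h1 := (hJx b hb x hx).const_mul ((Mf f b)⁻¹)
    have he : (fun x => F b x) = fun x => (Mf f b)⁻¹ * J b x := funext fun x => hF b x
    rw [he]; exact h1
  -- MVT : choose intermediate points
  have hMVT : ∀ᶠ b in 𝓝 a, ∃ c,
      (c ∈ Ioo (x0 - δ) (x0 + δ) ∧ |c - x0| ≤ |φ b - x0|) ∧
      F b x0 - q = ((Mf f b)⁻¹ * (c ^ (b - 1) * f c)) * (x0 - φ b) := by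
    have hev : ∀ᶠ b in 𝓝 a, φ b ∈ Ioo (x0 - δ / 2) (x0 + δ / 2) :=
      hφcont (Ioo_mem_nhds (by linarith) (by linarith))
    filter_upwards [hev, hI.mem_nhds ha] with b hbφ hbI
    have hφq : F b (φ b) = q := (hH2 b hbI q hq).2
    have hsub : Icc (min (φ b) x0) (max (φ b) x0) ⊆ Ioo (x0 - δ) (x0 + δ) := by
      intro z hz
      rcases hbφ with ⟨hb1, hb2⟩
      constructor
      · have h := hz.1
        rcases le_total (φ b) x0 with hle | hle
        · rw [min_eq_left hle] at h; linarith
        · rw [min_eq_right hle] at h; linarith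
      · have h := hz.2
        rcases le_total (φ b) x0 with hle | hle
        · rw [max_eq_right hle] at h; linarith
        · rw [max_eq_left hle] at h; linarith
    rcases lt_trichotomy (φ b) x0 with hlt | heq | hgt
    · have hmin : min (φ b) x0 = φ b := min_eq_left hlt.le
      have hmax : max (φ b) x0 = x0 := max_eq_right hlt.le
      obtain ⟨c, hc, hceq⟩ := exists_hasDerivAt_eq_slope (fun x => F b x)
        (fun x => (Mf f b)⁻¹ * (x ^ (b - 1) * f x)) hlt
        (fun x hx => ((hFx b hbI x (hsub (by rw [hmin, hmax]; exact hx))).continuousAt).continuousWithinAt)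
        (fun x hx => hFx b hbI x (hsub (by rw [hmin, hmax]; exact ⟨hx.1.le, hx.2.le⟩)))
      have hcI : c ∈ Ioo (x0 - δ) (x0 + δ) :=
        hsub (by rw [hmin, hmax]; exact ⟨hc.1.le, hc.2.le⟩)
      have hne : x0 - φ b ≠ 0 := ne_of_gt (sub_pos.2 hlt)
      have h2 : ((Mf f b)⁻¹ * (c ^ (b - 1) * f c)) * (x0 - φ b) = F b x0 - F b (φ b) := by
        rw [hceq]; field_simp
      refine ⟨c, ⟨hcI, ?_⟩, ?_⟩
      · rw [abs_of_neg (sub_neg.2 hc.2), abs_of_neg (sub_neg.2 hlt)]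
        linarith [hc.1]
      · rw [hφq] at h2; linarith
    · refine ⟨x0, ⟨⟨by linarith, by linarith⟩, by simp [heq]⟩, ?_⟩
      have hq0 : F b x0 = q := by rw [← heq]; exact hφq
      rw [hq0, heq]; ring
    · have hmin : min (φ b) x0 = x0 := min_eq_right hgt.le
      have hmax : max (φ b) x0 = φ b := max_eq_left hgt.le
      obtain ⟨c, hc, hceq⟩ := exists_hasDerivAt_eq_slope (fun x => F b x)
        (fun x => (Mf f b)⁻¹ * (x ^ (b - 1) * f x)) hgt
        (fun x hx => ((hFx b hbI x (hsub (by rw [hmin, hmax]; exact hx))).continuousAt).continuousWithinAt)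
        (fun x hx => hFx b hbI x (hsub (by rw [hmin, hmax]; exact ⟨hx.1.le, hx.2.le⟩)))
      have hcI : c ∈ Ioo (x0 - δ) (x0 + δ) :=
        hsub (by rw [hmin, hmax]; exact ⟨hc.1.le, hc.2.le⟩)
      have hne : φ b - x0 ≠ 0 := ne_of_gt (sub_pos.2 hgt)
      have h2 : ((Mf f b)⁻¹ * (c ^ (b - 1) * f c)) * (φ b - x0) = F b (φ b) - F b x0 := by
        rw [hceq]; field_simp
      refine ⟨c, ⟨hcI, ?_⟩, ?_⟩
      · rw [abs_of_pos (sub_pos.2 hc.1), abs_of_pos (sub_pos.2 hgt)]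
        linarith [hc.2]
      · rw [hφq] at h2; linarith
  obtain ⟨ξ, hξ⟩ := hMVT.choice
  -- parameter-derivative of F at x0
  have hFb : HasDerivAt (fun b => F b x0)
      (-M' / (Mf f a) ^ 2 * J a x0 + (Mf f a)⁻¹ * K x0) a := by
    have h1 := (hMderiv.inv (ne_of_gt hMa)).mul (hJb x0).2
    have he : (fun b => F b x0) = fun b => (Mf f b)⁻¹ * J b x0 := funext fun b => hF b x0
    rw [he]; exact h1
  set Fb' : ℝ := -M' / (Mf f a) ^ 2 * J a x0 + (Mf f a)⁻¹ * K x0 with hFb'def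
  set Fx' : ℝ := (Mf f a)⁻¹ * (x0 ^ (a - 1) * f x0) with hFx'def
  have hFx'pos : 0 < Fx' :=
    mul_pos (inv_pos.2 hMa) (mul_pos (Real.rpow_pos_of_pos hx0pos _) hfx0pos)
  -- ξ tends to x0
  have hξt : Filter.Tendsto ξ (𝓝 a) (𝓝 x0) := by
    have habs : Filter.Tendsto (fun b => |φ b - x0|) (𝓝 a) (𝓝 0) := by
      have h1 : Filter.Tendsto (fun b => φ b - x0) (𝓝 a) (𝓝 (x0 - x0)) :=
        hφcont.sub tendsto_const_nhds
      rw [sub_self] at h1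
      exact (tendsto_zero_iff_abs_tendsto_zero _).1 h1
    have h0 : Filter.Tendsto (fun b => |ξ b - x0|) (𝓝 a) (𝓝 0) :=
      squeeze_zero' (Filter.Eventually.of_forall fun b => abs_nonneg _)
        (hξ.mono fun b hb => hb.1.2) habs
    have h1 : Filter.Tendsto (fun b => ξ b - x0) (𝓝 a) (𝓝 0) :=
      (tendsto_zero_iff_abs_tendsto_zero _).2 h0
    have h2 := h1.add (tendsto_const_nhds (x := x0))
    rw [zero_add] at h2
    simpa using h2
  -- the auxiliary denominator tends to Fx'
  have hD : Filter.Tendsto (fun b => (Mf f b)⁻¹ * ((ξ b) ^ (b - 1) * f (ξ b)))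
      (𝓝 a) (𝓝 Fx') := by
    have hMt : Filter.Tendsto (fun b => (Mf f b)⁻¹) (𝓝 a) (𝓝 (Mf f a)⁻¹) :=
      (hMderiv.continuousAt.tendsto).inv₀ (ne_of_gt hMa)
    have hpair : Filter.Tendsto (fun b => ((ξ b), b - 1)) (𝓝 a) (𝓝 (x0, a - 1)) :=
      hξt.prodMk_nhds ((continuous_id.sub continuous_const).tendsto a)
    have hrt : Filter.Tendsto (fun b => (ξ b) ^ (b - 1)) (𝓝 a) (𝓝 (x0 ^ (a - 1))) :=
      (Real.continuousAt_rpow (x0, a - 1) (Or.inl (ne_of_gt hx0pos))).tendsto.comp hpair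
    have hft : Filter.Tendsto (fun b => f (ξ b)) (𝓝 a) (𝓝 (f x0)) :=
      (contf.continuousAt (hS.mem_nhds hx0S)).tendsto.comp hξt
    exact hMt.mul (hrt.mul hft)
  -- derivative of φ
  have hφd : HasDerivAt φ (-Fb' / Fx') a := by
    rw [hasDerivAt_iff_tendsto_slope]
    have hlim : Filter.Tendsto
        (fun b => -(slope (fun b => F b x0) a b) /
          ((Mf f b)⁻¹ * ((ξ b) ^ (b - 1) * f (ξ b)))) (𝓝[≠] a) (𝓝 (-Fb' / Fx')) :=
      ((hasDerivAt_iff_tendsto_slope.1 hFb).neg).div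
        (hD.mono_left nhdsWithin_le_nhds) (ne_of_gt hFx'pos)
    refine hlim.congr' ?_
    have hev1 : ∀ᶠ b in 𝓝 a,
        (F b x0 - q = ((Mf f b)⁻¹ * ((ξ b) ^ (b - 1) * f (ξ b))) * (x0 - φ b)) ∧
        ξ b ∈ Ioo (x0 - δ) (x0 + δ) ∧ b ∈ I := by
      filter_upwards [hξ, hI.mem_nhds ha] with b hb hbI
      exact ⟨hb.2, hb.1.1, hbI⟩
    filter_upwards [hev1.filter_mono nhdsWithin_le_nhds] with b hb
    obtain ⟨heq, hξI, hbI⟩ := hb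
    have hDpos : 0 < (Mf f b)⁻¹ * ((ξ b) ^ (b - 1) * f (ξ b)) :=
      mul_pos (inv_pos.2 (hpos b hbI))
        (mul_pos (Real.rpow_pos_of_pos (lt_trans hupos hξI.1) _) (fpos _ (hδS hξI)))
    have hφa : φ a = x0 := rfl
    have hDne : (Mf f b)⁻¹ * ((ξ b) ^ (b - 1) * f (ξ b)) ≠ 0 := ne_of_gt hDpos
    rw [slope_def_field, slope_def_field, hφa, hFx0, heq,
      neg_div, div_right_comm, mul_div_cancel_left₀ _ hDne, ← neg_div, neg_sub]
  -- conclude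
  have hlogd : deriv (fun b => Real.log (H b q)) a = (-Fb' / Fx') / x0 := by
    have h1 := (hφd.log (ne_of_gt hx0pos)).deriv
    exact h1
  have hHa : H a q = x0 := rfl
  rw [hlogd, hL, hHa, hψ]
  have hintg : IntegrableOn (fun y => y ^ (a - 1) * f y) (Ioo (0:ℝ) x0) :=
    (hInt a ha).mono_set (fun y hy => hy.1)
  have hsplit : (∫ y in Ioo (0:ℝ) x0, y ^ (a - 1) * (M' / Mf f a - Real.log y) * f y)
      = (M' / Mf f a) * J a x0 - K x0 := by
    have he : (fun y => y ^ (a - 1) * (M' / Mf f a - Real.log y) * f y)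
        = fun y => (M' / Mf f a) * (y ^ (a - 1) * f y) - y ^ (a - 1) * Real.log y * f y :=
      funext fun y => by ring
    rw [he, integral_sub (hintg.const_mul _) (hJb x0).1, integral_const_mul]
  rw [hsplit]
  -- final algebra
  rw [hFb'def, hFx'def]
  have hr : x0 ^ (a - 1) = x0 ^ a / x0 := Real.rpow_sub_one (ne_of_gt hx0pos) a
  have hxa : (0:ℝ) < x0 ^ a := Real.rpow_pos_of_pos hx0pos a
  rw [hr]
  field_simp
  ring
end

section
/- Define h_1(a,x) := ψ_0(a) − log x and h_n := S(h_{n-1}) where S(h)(a,x) := ∂h/∂a(a,x) + h(a,x) log x, and ψ_0 = (log M_f)'. Then for every n ≥ 1, h_n(a,x) is a polynomial of degree n in log x with coefficients smooth in a, and ∫₀^∞ h_n(a,y) y^{a-1} f(y) dy = 0 for all a in the interior of {a : 0 < M_f(a) < ∞}. -/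
open MeasureTheory Set

lemma logpow_le {x ε : ℝ} (hx : 1 ≤ x) (hε : 0 < ε) (m : ℕ) :
    (Real.log x) ^ m ≤ ((m : ℝ) / ε) ^ m * x ^ ε := by
  have hx0 : (0:ℝ) < x := lt_of_lt_of_le one_pos hx
  rcases Nat.eq_zero_or_pos m with rfl | hm
  · simpa using Real.one_le_rpow hx hε.le
  · have hm0 : ((m : ℝ)) ≠ 0 := by positivity
    have hδ : 0 < ε / m := by positivity
    have h1 : Real.log x ≤ (m / ε) * x ^ (ε / m) := by
      have h := Real.log_le_rpow_div hx0.le hδ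
      calc Real.log x ≤ x ^ (ε / m) / (ε / m) := h
        _ = (m / ε) * x ^ (ε / m) := by
            rw [div_eq_inv_mul, inv_div]
    calc (Real.log x) ^ m ≤ ((m / ε) * x ^ (ε / m)) ^ m :=
          pow_le_pow_left₀ (Real.log_nonneg hx) h1 m
      _ = ((m : ℝ) / ε) ^ m * (x ^ (ε / m)) ^ m := mul_pow _ _ _
      _ = ((m : ℝ) / ε) ^ m * x ^ ε := by
          rw [← Real.rpow_natCast (x ^ (ε / m)) m, ← Real.rpow_mul hx0.le,
            div_mul_cancel₀ _ hm0]

lemma key_bound {b ε s x : ℝ} (hε : 0 < ε) (hx : 0 < x) (hs : |s - b| ≤ ε) (m : ℕ) :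
    |Real.log x| ^ m * x ^ (s - 1) ≤
      ((m : ℝ) / ε) ^ m * (x ^ (b - 2*ε - 1) + x ^ (b + 2*ε - 1)) := by
  have hC : (0:ℝ) ≤ ((m : ℝ) / ε) ^ m := by positivity
  obtain ⟨hs1, hs2⟩ := abs_le.mp hs
  rcases le_or_gt 1 x with h1 | h1
  · have hL : |Real.log x| = Real.log x := abs_of_nonneg (Real.log_nonneg h1)
    calc |Real.log x| ^ m * x ^ (s - 1)
        ≤ (((m : ℝ) / ε) ^ m * x ^ ε) * x ^ (s - 1) := by
          exact mul_le_mul_of_nonneg_right (by rw [hL]; exact logpow_le h1 hε m)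
            (Real.rpow_nonneg hx.le _)
      _ = ((m : ℝ) / ε) ^ m * x ^ (ε + (s - 1)) := by
          rw [mul_assoc, ← Real.rpow_add hx]
      _ ≤ ((m : ℝ) / ε) ^ m * x ^ (b + 2*ε - 1) := by
          exact mul_le_mul_of_nonneg_left
            (Real.rpow_le_rpow_of_exponent_le h1 (by linarith)) hC
      _ ≤ ((m : ℝ) / ε) ^ m * (x ^ (b - 2*ε - 1) + x ^ (b + 2*ε - 1)) := by
          have := Real.rpow_nonneg hx.le (b - 2*ε - 1)
          nlinarith
  · have hxinv : 1 ≤ x⁻¹ := (one_le_inv₀ hx).mpr h1.le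
    have hL : |Real.log x| = Real.log x⁻¹ := by
      rw [Real.log_inv, abs_of_nonpos (Real.log_nonpos hx.le h1.le)]
    have h2 : |Real.log x| ^ m ≤ ((m : ℝ) / ε) ^ m * x ^ (-ε) := by
      rw [hL]
      calc (Real.log x⁻¹) ^ m ≤ ((m : ℝ) / ε) ^ m * x⁻¹ ^ ε := logpow_le hxinv hε m
        _ = ((m : ℝ) / ε) ^ m * x ^ (-ε) := by
            rw [← Real.rpow_neg_one x, ← Real.rpow_mul hx.le]
            norm_num
    calc |Real.log x| ^ m * x ^ (s - 1)
        ≤ (((m : ℝ) / ε) ^ m * x ^ (-ε)) * x ^ (b - ε - 1) := by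
          refine mul_le_mul h2 (Real.rpow_le_rpow_of_exponent_ge hx h1.le (by linarith))
            (Real.rpow_nonneg hx.le _) (by positivity)
      _ = ((m : ℝ) / ε) ^ m * x ^ (b - 2*ε - 1) := by
          rw [mul_assoc, ← Real.rpow_add hx]; ring_nf
      _ ≤ ((m : ℝ) / ε) ^ m * (x ^ (b - 2*ε - 1) + x ^ (b + 2*ε - 1)) := by
          have := Real.rpow_nonneg hx.le (b + 2*ε - 1)
          nlinarith

noncomputable def Mk (f : ℝ → ℝ) (m : ℕ) (b : ℝ) : ℝ :=
  ∫ x in Ioi (0:ℝ), (Real.log x) ^ m * x ^ (b - 1) * f x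

noncomputable def Fm (f : ℝ → ℝ) (m : ℕ) (s : ℂ) : ℂ :=
  ∫ x in Ioi (0:ℝ), ((Real.log x : ℂ)) ^ m * (x : ℂ) ^ (s - 1) * (f x : ℂ)

lemma aesm_Fm {f : ℝ → ℝ} {b₀ : ℝ}
    (h0 : IntegrableOn (fun x => x ^ (b₀ - 1) * f x) (Ioi (0:ℝ))) (m : ℕ) (s : ℂ) :
    AEStronglyMeasurable (fun x : ℝ => ((Real.log x : ℂ)) ^ m * (x : ℂ) ^ (s - 1) * (f x : ℂ))
      (volume.restrict (Ioi (0:ℝ))) := by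
  have hcont : ContinuousOn (fun x : ℝ => ((Real.log x : ℂ)) ^ m * (x : ℂ) ^ (s - (b₀:ℂ)))
      (Ioi (0:ℝ)) := by
    refine ContinuousOn.mul ?_ ?_
    · exact (Complex.continuous_ofReal.comp_continuousOn
        (Real.continuousOn_log.mono (fun x hx => ne_of_gt hx))).pow m
    · exact (Complex.continuous_ofReal.continuousOn).cpow_const
        (fun x hx => Complex.ofReal_mem_slitPlane.mpr hx)
  have h1 : AEStronglyMeasurable (fun x : ℝ => ((x ^ (b₀ - 1) * f x : ℝ) : ℂ))
      (volume.restrict (Ioi (0:ℝ))) :=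
    Complex.continuous_ofReal.comp_aestronglyMeasurable h0.aestronglyMeasurable
  refine ((hcont.aestronglyMeasurable measurableSet_Ioi).mul h1).congr ?_
  filter_upwards [ae_restrict_mem measurableSet_Ioi] with x hx
  have hx0 : (x : ℂ) ≠ 0 := Complex.ofReal_ne_zero.mpr (ne_of_gt hx)
  have hc : ((x ^ (b₀ - 1) : ℝ) : ℂ) = (x : ℂ) ^ ((b₀ : ℂ) - 1) := by
    rw [Complex.ofReal_cpow (le_of_lt hx)]; push_cast; ring_nf
  have hadd : (x : ℂ) ^ (s - (b₀:ℂ)) * (x : ℂ) ^ ((b₀:ℂ) - 1) = (x : ℂ) ^ (s - 1) := by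
    rw [← Complex.cpow_add _ _ hx0]; ring_nf
  show ((Real.log x : ℂ)) ^ m * (x:ℂ) ^ (s - (b₀:ℂ)) * ((x ^ (b₀ - 1) * f x : ℝ) : ℂ)
      = ((Real.log x : ℂ)) ^ m * (x:ℂ) ^ (s - 1) * (f x : ℂ)
  rw [Complex.ofReal_mul, hc,
    show ((Real.log x : ℂ)) ^ m * (x:ℂ) ^ (s - (b₀:ℂ)) * ((x:ℂ) ^ ((b₀:ℂ) - 1) * (f x : ℂ))
        = ((Real.log x : ℂ)) ^ m * ((x:ℂ) ^ (s - (b₀:ℂ)) * (x:ℂ) ^ ((b₀:ℂ) - 1)) * (f x : ℂ)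
      from by ring, hadd]

lemma norm_integrand {f : ℝ → ℝ} {x : ℝ} (hx : 0 < x) (hfx : 0 ≤ f x) (m : ℕ) (s : ℂ) :
    ‖((Real.log x : ℂ)) ^ m * (x : ℂ) ^ (s - 1) * (f x : ℂ)‖
      = |Real.log x| ^ m * x ^ (s.re - 1) * f x := by
  rw [norm_mul, norm_mul, norm_pow, Complex.norm_real, Real.norm_eq_abs,
    Complex.norm_real, Real.norm_eq_abs, abs_of_nonneg hfx,
    Complex.norm_cpow_eq_rpow_re_of_pos hx, Complex.sub_re,
    Complex.one_re]

lemma hasDerivAt_integrand {x : ℝ} (hx : 0 < x) (m : ℕ) (r : ℝ) (s : ℂ) :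
    HasDerivAt (fun s : ℂ => ((Real.log x : ℂ)) ^ m * (x : ℂ) ^ (s - 1) * (r : ℂ))
      (((Real.log x : ℂ)) ^ (m + 1) * (x : ℂ) ^ (s - 1) * (r : ℂ)) s := by
  have hx0 : (x : ℂ) ≠ 0 := Complex.ofReal_ne_zero.mpr (ne_of_gt hx)
  have hdef : ∀ w : ℂ, (x : ℂ) ^ (w - 1) = Complex.exp (Complex.log x * (w - 1)) :=
    fun w => Complex.cpow_def_of_ne_zero hx0 _
  have hl : HasDerivAt (fun w : ℂ => Complex.log x * (w - 1)) (Complex.log x) s := by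
    simpa using ((hasDerivAt_id s).sub_const 1).const_mul (Complex.log x)
  have hd : HasDerivAt (fun w : ℂ => (x : ℂ) ^ (w - 1))
      ((x : ℂ) ^ (s - 1) * Complex.log x) s := by
    have := (Complex.hasDerivAt_exp (Complex.log x * (s - 1))).comp s hl
    simp only [Function.comp_def] at this
    simp only [← hdef] at this
    simpa [mul_comm] using this
  have := (hd.const_mul (((Real.log x : ℂ)) ^ m)).mul_const (r : ℂ)
  refine this.congr_deriv ?_
  rw [← Complex.ofReal_log hx.le]
  ring

lemma hasDerivAt_Fm {f : ℝ → ℝ} (hf0 : ∀ x ∈ Ioi (0:ℝ), 0 ≤ f x) {I : Set ℝ} (hI : IsOpen I)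
    (hInt : ∀ b ∈ I, IntegrableOn (fun x => x ^ (b - 1) * f x) (Ioi (0:ℝ)))
    (m : ℕ) {s₀ : ℂ} (hs₀ : s₀.re ∈ I) :
    HasDerivAt (Fm f m) (Fm f (m + 1) s₀) s₀ := by
  set b := s₀.re with hb
  obtain ⟨ε, hε, hball⟩ := Metric.isOpen_iff.mp hI b hs₀
  set δ := ε / 3 with hδdef
  have hδ : 0 < δ := by positivity
  have hb1 : b - 2 * δ ∈ I := hball (by
    simp only [Metric.mem_ball, Real.dist_eq]
    rw [abs_of_nonpos (by linarith)]; simp only [hδdef]; linarith)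
  have hb2 : b + 2 * δ ∈ I := hball (by
    simp only [Metric.mem_ball, Real.dist_eq]
    rw [abs_of_nonneg (by linarith)]; simp only [hδdef]; linarith)
  have hboundInt : ∀ C : ℝ, Integrable
      (fun x => C * (x ^ (b - 2*δ - 1) * f x + x ^ (b + 2*δ - 1) * f x))
      (volume.restrict (Ioi (0:ℝ))) :=
    fun C => (((hInt _ hb1).add (hInt _ hb2)).const_mul C)
  have key : ∀ (k : ℕ) (s : ℂ), |s.re - b| ≤ δ → ∀ x ∈ Ioi (0:ℝ),
      ‖((Real.log x : ℂ)) ^ k * (x : ℂ) ^ (s - 1) * (f x : ℂ)‖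
        ≤ ((k : ℝ)/δ) ^ k * (x ^ (b - 2*δ - 1) * f x + x ^ (b + 2*δ - 1) * f x) := by
    intro k s hsre x hx
    rw [norm_integrand hx (hf0 x hx) k s]
    calc |Real.log x| ^ k * x ^ (s.re - 1) * f x
        ≤ ((k : ℝ)/δ) ^ k * (x ^ (b - 2*δ - 1) + x ^ (b + 2*δ - 1)) * f x :=
          mul_le_mul_of_nonneg_right (key_bound hδ hx hsre k) (hf0 x hx)
      _ = ((k : ℝ)/δ) ^ k * (x ^ (b - 2*δ - 1) * f x + x ^ (b + 2*δ - 1) * f x) := by ring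
  have main := hasDerivAt_integral_of_dominated_loc_of_deriv_le
    (μ := volume.restrict (Ioi (0:ℝ)))
    (F := fun s x => ((Real.log x : ℂ)) ^ m * (x : ℂ) ^ (s - 1) * (f x : ℂ))
    (F' := fun s x => ((Real.log x : ℂ)) ^ (m+1) * (x : ℂ) ^ (s - 1) * (f x : ℂ))
    (x₀ := s₀)
    (bound := fun x => (((m:ℝ)+1)/δ) ^ (m+1) * (x ^ (b - 2*δ - 1) * f x + x ^ (b + 2*δ - 1) * f x))
    (Metric.ball_mem_nhds s₀ hδ)
    (Filter.Eventually.of_forall (fun s => aesm_Fm (hInt b hs₀) m s))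
    ?_ (aesm_Fm (hInt b hs₀) (m+1) s₀) ?_ ?_ ?_
  · exact main.2
  · -- integrability of F s₀
    refine (hboundInt (((m:ℝ)/δ) ^ m)).mono' (aesm_Fm (hInt b hs₀) m s₀) ?_
    filter_upwards [ae_restrict_mem measurableSet_Ioi] with x hx
    exact key m s₀ (by simp [hb, hδ.le]) x hx
  · -- h_bound
    filter_upwards [ae_restrict_mem measurableSet_Ioi] with x hx
    intro s hsball
    have hre : |s.re - b| ≤ δ := by
      have h1 : |s.re - b| ≤ ‖s - s₀‖ := by
        simpa using Complex.abs_re_le_norm (s - s₀)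
      have h2 : ‖s - s₀‖ < δ := by
        rw [← dist_eq_norm]; exact Metric.mem_ball.mp hsball
      linarith
    have := key (m+1) s hre x hx
    simpa using this
  · exact hboundInt _
  · filter_upwards [ae_restrict_mem measurableSet_Ioi] with x hx
    intro s _
    exact hasDerivAt_integrand hx m (f x) s

lemma Fm_ofReal (f : ℝ → ℝ) (m : ℕ) (t : ℝ) : Fm f m t = ((Mk f m t : ℝ) : ℂ) := by
  unfold Fm Mk
  have h := integral_ofReal (𝕜 := ℂ) (μ := volume.restrict (Ioi (0:ℝ)))
    (f := fun x => Real.log x ^ m * x ^ (t - 1) * f x)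
  refine Eq.trans ?_ h
  refine setIntegral_congr_fun measurableSet_Ioi (fun x hx => ?_)
  have hc : ((x ^ (t - 1) : ℝ) : ℂ) = (x : ℂ) ^ ((t:ℂ) - 1) := by
    rw [Complex.ofReal_cpow (le_of_lt hx)]; push_cast; ring_nf
  push_cast
  rw [← hc]
  push_cast
  ring_nf
  rfl

lemma hasDerivAt_Mk {f : ℝ → ℝ} (hf0 : ∀ x ∈ Ioi (0:ℝ), 0 ≤ f x) {I : Set ℝ} (hI : IsOpen I)
    (hInt : ∀ b ∈ I, IntegrableOn (fun x => x ^ (b - 1) * f x) (Ioi (0:ℝ)))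
    (m : ℕ) {b : ℝ} (hb : b ∈ I) :
    HasDerivAt (Mk f m) (Mk f (m + 1) b) b := by
  have h := (hasDerivAt_Fm hf0 hI hInt m (s₀ := (b:ℂ)) (by simpa using hb)).real_of_complex
  have he : (fun x : ℝ => (Fm f m x).re) = Mk f m := by
    funext t; rw [Fm_ofReal]; simp
  rw [he, Fm_ofReal] at h
  simpa using h

lemma contDiffOn_Mk {f : ℝ → ℝ} (hf0 : ∀ x ∈ Ioi (0:ℝ), 0 ≤ f x) {I : Set ℝ} (hI : IsOpen I)
    (hInt : ∀ b ∈ I, IntegrableOn (fun x => x ^ (b - 1) * f x) (Ioi (0:ℝ))) (m : ℕ) :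
    ContDiffOn ℝ (⊤ : ℕ∞) (Mk f m) I := by
  have hS : IsOpen {s : ℂ | s.re ∈ I} := hI.preimage Complex.continuous_re
  have hFA : AnalyticOnNhd ℂ (Fm f m) {s : ℂ | s.re ∈ I} :=
    DifferentiableOn.analyticOnNhd
      (fun s hs => ((hasDerivAt_Fm hf0 hI hInt m hs).differentiableAt).differentiableWithinAt) hS
  have h1 : AnalyticOnNhd ℝ (fun t : ℝ => Fm f m ((t : ℂ))) I := by
    refine (hFA.restrictScalars).comp ?_ ?_
    · exact fun t _ => Complex.ofRealCLM.analyticAt t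
    · intro t ht; simpa using ht
  have h2 : AnalyticOnNhd ℝ (fun t : ℝ => (Fm f m ((t : ℂ))).re) I :=
    fun t ht => (Complex.reCLM.analyticAt _).comp (h1 t ht)
  have he : ∀ t : ℝ, (Fm f m ((t : ℂ))).re = Mk f m t := by
    intro t; rw [Fm_ofReal]; simp
  have h3 : AnalyticOnNhd ℝ (Mk f m) I :=
    (h2.congr hI) (fun t _ => he t)
  exact h3.contDiffOn hI.uniqueDiffOn

lemma intMk {f : ℝ → ℝ} (hf0 : ∀ x ∈ Ioi (0:ℝ), 0 ≤ f x) {I : Set ℝ} (hI : IsOpen I)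
    (hInt : ∀ b ∈ I, IntegrableOn (fun x => x ^ (b - 1) * f x) (Ioi (0:ℝ)))
    (m : ℕ) {b : ℝ} (hb : b ∈ I) :
    IntegrableOn (fun x => (Real.log x) ^ m * x ^ (b - 1) * f x) (Ioi (0:ℝ)) := by
  obtain ⟨ε, hε, hball⟩ := Metric.isOpen_iff.mp hI b hb
  set δ := ε / 3 with hδdef
  have hδ : 0 < δ := by positivity
  have hb1 : b - 2 * δ ∈ I := hball (by
    simp only [Metric.mem_ball, Real.dist_eq]
    rw [abs_of_nonpos (by linarith)]; simp only [hδdef]; linarith)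
  have hb2 : b + 2 * δ ∈ I := hball (by
    simp only [Metric.mem_ball, Real.dist_eq]
    rw [abs_of_nonneg (by linarith)]; simp only [hδdef]; linarith)
  have hmeas : AEStronglyMeasurable (fun x => (Real.log x) ^ m * x ^ (b - 1) * f x)
      (volume.restrict (Ioi (0:ℝ))) := by
    have hcont : ContinuousOn (fun x : ℝ => (Real.log x) ^ m) (Ioi (0:ℝ)) :=
      (Real.continuousOn_log.mono (fun x hx => ne_of_gt hx)).pow m
    refine ((hcont.aestronglyMeasurable measurableSet_Ioi).mul
      (hInt b hb).aestronglyMeasurable).congr ?_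
    filter_upwards [ae_restrict_mem measurableSet_Ioi] with x _
    simp only [Pi.mul_apply]
    ring
  refine ((((hInt _ hb1).add (hInt _ hb2)).const_mul (((m:ℝ)/δ) ^ m)).mono' hmeas ?_)
  filter_upwards [ae_restrict_mem measurableSet_Ioi] with x hx
  have h1 : ‖(Real.log x) ^ m * x ^ (b - 1) * f x‖ = |Real.log x| ^ m * x ^ (b - 1) * f x := by
    rw [Real.norm_eq_abs, abs_mul, abs_mul, abs_pow, abs_of_nonneg (Real.rpow_nonneg hx.le _),
      abs_of_nonneg (hf0 x hx)]
  rw [h1]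
  calc |Real.log x| ^ m * x ^ (b - 1) * f x
      ≤ ((m : ℝ)/δ) ^ m * (x ^ (b - 2*δ - 1) + x ^ (b + 2*δ - 1)) * f x :=
        mul_le_mul_of_nonneg_right (key_bound hδ hx (by simp [hδ.le]) m) (hf0 x hx)
    _ = ((m : ℝ)/δ) ^ m * (x ^ (b - 2*δ - 1) * f x + x ^ (b + 2*δ - 1) * f x) := by ring


noncomputable def cf (ψ : ℝ → ℝ) : ℕ → ℕ → ℝ → ℝ
  | 0, _, _ => 0
  | 1, i, b => if i = 0 then ψ b else if i = 1 then -1 else 0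
  | (n+2), i, b => deriv (cf ψ (n+1) i) b + (if i = 0 then 0 else cf ψ (n+1) (i-1) b)

lemma cf_succ (ψ : ℝ → ℝ) {n : ℕ} (hn : 1 ≤ n) (i : ℕ) (b : ℝ) :
    cf ψ (n+1) i b = deriv (cf ψ n i) b + (if i = 0 then 0 else cf ψ n (i-1) b) := by
  obtain ⟨m, rfl⟩ := Nat.exists_eq_add_of_le hn
  rw [Nat.add_comm 1 m]
  rfl

lemma cf_zero_of_gt (ψ : ℝ → ℝ) : ∀ n, 1 ≤ n → ∀ i, n < i → cf ψ n i = fun _ => 0 := by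
  intro n
  induction n with
  | zero => intro h; omega
  | succ n ih =>
    intro _ i hi
    rcases Nat.eq_zero_or_pos n with rfl | hn
    · funext b
      simp only [cf]
      rw [if_neg (by omega), if_neg (by omega)]
    · funext b
      rw [cf_succ ψ hn i b, ih hn i (by omega), if_neg (by omega),
        ih hn (i-1) (by omega)]
      simp

lemma cf_top (ψ : ℝ → ℝ) : ∀ n, 1 ≤ n → ∀ b, cf ψ n n b = -1 := by
  intro n
  induction n with
  | zero => intro h; omega
  | succ n ih =>
    intro _ b
    rcases Nat.eq_zero_or_pos n with rfl | hn
    · simp [cf]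
    · rw [cf_succ ψ hn (n+1) b, cf_zero_of_gt ψ n hn (n+1) (by omega), if_neg (by omega)]
      simp [ih hn b]

lemma cf_smooth {ψ : ℝ → ℝ} {I : Set ℝ} (hI : IsOpen I) (hψ : ContDiffOn ℝ (⊤ : ℕ∞) ψ I) :
    ∀ n i, ContDiffOn ℝ (⊤ : ℕ∞) (cf ψ n i) I := by
  intro n
  induction n with
  | zero => intro i; simpa [cf] using contDiffOn_const (c := (0:ℝ))
  | succ n ih =>
    intro i
    rcases Nat.eq_zero_or_pos n with rfl | hn
    · match i with
      | 0 => simpa [cf] using hψ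
      | 1 => simpa [cf] using contDiffOn_const (c := (-1:ℝ))
      | (j+2) => simpa [cf] using contDiffOn_const (c := (0:ℝ))
    · have hd : ContDiffOn ℝ (⊤ : ℕ∞) (deriv (cf ψ n i)) I :=
        (ih i).deriv_of_isOpen hI (by simp)
      have h2 : ContDiffOn ℝ (⊤ : ℕ∞) (fun b => if i = 0 then 0 else cf ψ n (i-1) b) I := by
        match i with
        | 0 => simpa using contDiffOn_const (c := (0:ℝ))
        | (j+1) => simpa using ih j
      have := hd.add h2
      refine this.congr (fun b _ => ?_)
      rw [cf_succ ψ hn i b]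


theorem stmt_16
    (f : ℝ → ℝ) (hf0 : ∀ x ∈ Ioi (0:ℝ), 0 ≤ f x)
    (I : Set ℝ) (hI : IsOpen I) (hne : I.Nonempty)
    (hInt : ∀ b ∈ I, IntegrableOn (fun x => x ^ (b - 1) * f x) (Ioi (0:ℝ)))
    (hpos : ∀ b ∈ I, 0 < Mf f b)
    (h : ℕ → ℝ → ℝ → ℝ)
    (hh1 : ∀ b x, h 1 b x = deriv (fun c => Real.log (Mf f c)) b - Real.log x)
    (hrec : ∀ n b x, h (n + 1) b x = deriv (fun c => h n c x) b + h n b x * Real.log x) :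
    ∀ n : ℕ, 1 ≤ n →
      (∃ c : ℕ → ℝ → ℝ,
        (∀ i, ContDiffOn ℝ (⊤ : ℕ∞) (c i) I) ∧ (∀ b ∈ I, c n b ≠ 0) ∧
          ∀ b ∈ I, ∀ x : ℝ,
            h n b x = ∑ i ∈ Finset.range (n + 1), c i b * (Real.log x) ^ i) ∧
      (∀ a ∈ I, ∫ y in Ioi (0:ℝ), h n a y * y ^ (a - 1) * f y = 0) := by
  set ψ : ℝ → ℝ := deriv (fun c => Real.log (Mf f c)) with hψdef
  have hMf_eq : Mf f = Mk f 0 := by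
    funext b; unfold Mf Mk; simp
  have hMk0pos : ∀ b ∈ I, 0 < Mk f 0 b := fun b hb => hMf_eq ▸ hpos b hb
  have hdMk : ∀ (m : ℕ) {b : ℝ}, b ∈ I → HasDerivAt (Mk f m) (Mk f (m+1) b) b :=
    fun m b hb => hasDerivAt_Mk hf0 hI hInt m hb
  have hψ_eq : ∀ b ∈ I, ψ b = Mk f 1 b / Mk f 0 b := by
    intro b hb
    have h1 : HasDerivAt (Mf f) (Mk f 1 b) b := by rw [hMf_eq]; exact hdMk 0 hb
    have h2 : HasDerivAt (fun c => Real.log (Mf f c)) ((Mf f b)⁻¹ * Mk f 1 b) b :=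
      (Real.hasDerivAt_log (hpos b hb).ne').comp b h1
    rw [hψdef, h2.deriv, hMf_eq, inv_mul_eq_div]
  have hψs : ContDiffOn ℝ (⊤ : ℕ∞) ψ I := by
    have := (contDiffOn_Mk hf0 hI hInt 1).div (contDiffOn_Mk hf0 hI hInt 0)
      (fun b hb => (hMk0pos b hb).ne')
    exact this.congr (fun b hb => hψ_eq b hb)
  have hcs := cf_smooth hI hψs
  have hdiffAt : ∀ (k i : ℕ) {b : ℝ}, b ∈ I → DifferentiableAt ℝ (cf ψ k i) b :=
    fun k i b hb =>
      (((hcs k i).differentiableOn (by simp)).differentiableAt (hI.mem_nhds hb))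
  have hpoly : ∀ n, 1 ≤ n → ∀ b ∈ I, ∀ x : ℝ,
      h n b x = ∑ i ∈ Finset.range (n+1), cf ψ n i b * (Real.log x)^i := by
    intro n hn
    induction n, hn using Nat.le_induction with
    | base =>
      intro b hb x
      rw [hh1]
      simp [Finset.sum_range_succ, cf]
      ring
    | succ n hn ih =>
      intro b hb x
      set L := Real.log x with hL
      have heq : (fun c => h n c x) =ᶠ[nhds b]
          (fun c => ∑ i ∈ Finset.range (n+1), cf ψ n i c * L^i) :=
        Filter.eventuallyEq_of_mem (hI.mem_nhds hb) (fun c hc => ih c hc x)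
      have hd : HasDerivAt (fun c => ∑ i ∈ Finset.range (n+1), cf ψ n i c * L^i)
          (∑ i ∈ Finset.range (n+1), deriv (cf ψ n i) b * L^i) b :=
        HasDerivAt.fun_sum (fun i _ => ((hdiffAt n i hb).hasDerivAt).mul_const _)
      have hder : deriv (fun c => h n c x) b
          = ∑ i ∈ Finset.range (n+1), deriv (cf ψ n i) b * L^i := by
        rw [heq.deriv_eq]; exact hd.deriv
      rw [hrec, hder, ih b hb x]
      have e1 : ∀ i, cf ψ (n+1) i b * L^i
          = deriv (cf ψ n i) b * L^i + (if i = 0 then 0 else cf ψ n (i-1) b) * L^i :=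
        fun i => by rw [cf_succ ψ hn i b]; ring
      have hA : ∑ i ∈ Finset.range (n+1+1), deriv (cf ψ n i) b * L^i
          = ∑ i ∈ Finset.range (n+1), deriv (cf ψ n i) b * L^i := by
        rw [Finset.sum_range_succ (fun i => deriv (cf ψ n i) b * L^i) (n+1),
          cf_zero_of_gt ψ n hn (n+1) (by omega)]
        simp
      have hB : ∑ i ∈ Finset.range (n+1+1), (if i = 0 then 0 else cf ψ n (i-1) b) * L^i
          = (∑ i ∈ Finset.range (n+1), cf ψ n i b * L^i) * L := by
        rw [Finset.sum_range_succ' (fun i => (if i = 0 then 0 else cf ψ n (i-1) b) * L^i) (n+1)]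
        simp only [Nat.add_sub_cancel, Nat.succ_ne_zero, ite_false, ite_true, pow_zero,
          mul_one, add_zero, if_pos rfl, zero_mul, Finset.sum_mul]
        exact Finset.sum_congr rfl (fun i _ => by rw [pow_succ]; ring)
      calc ∑ i ∈ Finset.range (n+1), deriv (cf ψ n i) b * L^i
            + (∑ i ∈ Finset.range (n+1), cf ψ n i b * L^i) * L
          = ∑ i ∈ Finset.range (n+1+1), deriv (cf ψ n i) b * L^i
            + ∑ i ∈ Finset.range (n+1+1), (if i = 0 then 0 else cf ψ n (i-1) b) * L^i := by
            rw [hA, hB]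
        _ = ∑ i ∈ Finset.range (n+1+1),
              (deriv (cf ψ n i) b * L^i + (if i = 0 then 0 else cf ψ n (i-1) b) * L^i) :=
            Finset.sum_add_distrib.symm
        _ = ∑ i ∈ Finset.range (n+1+1), cf ψ (n+1) i b * L^i :=
            Finset.sum_congr rfl (fun i _ => (e1 i).symm)
  have hzero : ∀ n, 1 ≤ n → ∀ a ∈ I,
      ∑ i ∈ Finset.range (n+1), cf ψ n i a * Mk f i a = 0 := by
    intro n hn
    induction n, hn using Nat.le_induction with
    | base =>
      intro a ha
      simp [Finset.sum_range_succ, cf]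
      rw [hψ_eq a ha, div_mul_cancel₀ _ (hMk0pos a ha).ne']
      ring
    | succ n hn ih =>
      intro a ha
      have heq : (fun c => ∑ i ∈ Finset.range (n+1), cf ψ n i c * Mk f i c) =ᶠ[nhds a]
          (fun _ => (0:ℝ)) :=
        Filter.eventuallyEq_of_mem (hI.mem_nhds ha) (fun c hc => ih c hc)
      have hd : HasDerivAt (fun c => ∑ i ∈ Finset.range (n+1), cf ψ n i c * Mk f i c)
          (∑ i ∈ Finset.range (n+1),
            (deriv (cf ψ n i) a * Mk f i a + cf ψ n i a * Mk f (i+1) a)) a :=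
        HasDerivAt.fun_sum (fun i _ => ((hdiffAt n i ha).hasDerivAt).mul (hdMk i ha))
      have hsum0 : ∑ i ∈ Finset.range (n+1),
          (deriv (cf ψ n i) a * Mk f i a + cf ψ n i a * Mk f (i+1) a) = 0 := by
        rw [← hd.deriv, heq.deriv_eq]; simp
      have e1 : ∀ i, cf ψ (n+1) i a * Mk f i a
          = deriv (cf ψ n i) a * Mk f i a + (if i = 0 then 0 else cf ψ n (i-1) a) * Mk f i a :=
        fun i => by rw [cf_succ ψ hn i a]; ring
      have h1 : ∑ i ∈ Finset.range (n+2), deriv (cf ψ n i) a * Mk f i a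
          = ∑ i ∈ Finset.range (n+1), deriv (cf ψ n i) a * Mk f i a := by
        rw [Finset.sum_range_succ, cf_zero_of_gt ψ n hn (n+1) (by omega)]
        simp
      have h2 : ∑ i ∈ Finset.range (n+2), (if i = 0 then 0 else cf ψ n (i-1) a) * Mk f i a
          = ∑ i ∈ Finset.range (n+1), cf ψ n i a * Mk f (i+1) a := by
        rw [Finset.sum_range_succ' (fun i => (if i = 0 then 0 else cf ψ n (i-1) a) * Mk f i a) (n+1)]
        simp
      calc ∑ i ∈ Finset.range (n+1+1), cf ψ (n+1) i a * Mk f i a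
          = ∑ i ∈ Finset.range (n+1+1),
              (deriv (cf ψ n i) a * Mk f i a + (if i = 0 then 0 else cf ψ n (i-1) a) * Mk f i a) :=
            Finset.sum_congr rfl (fun i _ => e1 i)
        _ = ∑ i ∈ Finset.range (n+1+1), deriv (cf ψ n i) a * Mk f i a
            + ∑ i ∈ Finset.range (n+1+1), (if i = 0 then 0 else cf ψ n (i-1) a) * Mk f i a :=
            Finset.sum_add_distrib
        _ = ∑ i ∈ Finset.range (n+1), deriv (cf ψ n i) a * Mk f i a
            + ∑ i ∈ Finset.range (n+1), cf ψ n i a * Mk f (i+1) a := by rw [h1, h2]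
        _ = ∑ i ∈ Finset.range (n+1),
              (deriv (cf ψ n i) a * Mk f i a + cf ψ n i a * Mk f (i+1) a) :=
            Finset.sum_add_distrib.symm
        _ = 0 := hsum0
  intro n hn
  refine ⟨⟨cf ψ n, fun i => hcs n i, fun b hb => by rw [cf_top ψ n hn b]; norm_num,
    fun b hb x => hpoly n hn b hb x⟩, ?_⟩
  intro a ha
  have hrw : ∀ y : ℝ, h n a y * y^(a-1) * f y
      = ∑ i ∈ Finset.range (n+1), cf ψ n i a * ((Real.log y)^i * y^(a-1) * f y) := by
    intro y
    rw [hpoly n hn a ha y, Finset.sum_mul, Finset.sum_mul]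
    exact Finset.sum_congr rfl (fun i _ => by ring)
  simp only [hrw]
  rw [integral_finset_sum _ (fun i _ => (intMk hf0 hI hInt i ha).const_mul _)]
  simp only [integral_const_mul]
  have := hzero n hn a ha
  simp only [Mk] at this
  exact this
end

section
/- Let T(h)(a,x) := (x^a f(x))^{-1} ∫₀^x h(a,y) y^{a-1} f(y) dy and S(h)(a,x) := ∂_a h(a,x) + h(a,x) log x, and let ∂̃G := ∂_a G + x L^f ∂_x G. Then for smooth h, (∂̃ T(h))(a,x) = T(S(h))(a,x) − [(a + x f'(x)/f(x)) L^f(a,x) + log x] T(h)(a,x) + h(a,x) L^f(a,x), for all a ∈ D(M_f) and x in the support of f. -/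
open MeasureTheory Set Filter Topology

private lemma rpow_le_add' {y p b q : ℝ} (hy : 0 < y) (hpb : p ≤ b) (hbq : b ≤ q) :
    y ^ b ≤ y ^ p + y ^ q := by
  rcases le_total y 1 with h1 | h1
  · have h2 : y ^ b ≤ y ^ p := Real.rpow_le_rpow_of_exponent_ge hy h1 hpb
    have := Real.rpow_pos_of_pos hy q
    linarith
  · have h2 : y ^ b ≤ y ^ q := Real.rpow_le_rpow_of_exponent_le h1 hbq
    have := Real.rpow_pos_of_pos hy p
    linarith

private lemma abs_log_mul_le' {y δ : ℝ} (hy : 0 < y) (hδ : 0 < δ) :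
    |Real.log y| * δ ≤ y ^ δ + y ^ (-δ) := by
  have h1 : δ * Real.log y ≤ y ^ δ := by
    have h := Real.log_le_sub_one_of_pos (Real.rpow_pos_of_pos hy δ)
    rw [Real.log_rpow hy] at h; linarith
  have h2 : (-δ) * Real.log y ≤ y ^ (-δ) := by
    have h := Real.log_le_sub_one_of_pos (Real.rpow_pos_of_pos hy (-δ))
    rw [Real.log_rpow hy] at h; linarith
  have p1 : (0:ℝ) < y ^ δ := Real.rpow_pos_of_pos hy δ
  have p2 : (0:ℝ) < y ^ (-δ) := Real.rpow_pos_of_pos hy (-δ)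
  rcases abs_cases (Real.log y) with ⟨he, _⟩ | ⟨he, _⟩ <;> rw [he] <;> nlinarith

theorem stmt_17
    (f : ℝ → ℝ)
    (S : Set ℝ) (hS : IsOpen S) (hSsub : S ⊆ Ioi (0:ℝ))
    (hSupp : ∀ x, x ∈ S ↔ (0 < x ∧ f x ≠ 0))
    (hf0 : ∀ x ∈ Ioi (0:ℝ), 0 ≤ f x)
    (hfs : ContDiffOn ℝ (⊤ : ℕ∞) f S)
    (I : Set ℝ) (hI : IsOpen I)
    (hInt : ∀ b ∈ I, IntegrableOn (fun x => x ^ (b - 1) * f x) (Ioi (0:ℝ)))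
    (hpos : ∀ b ∈ I, 0 < Mf f b)
    (T : (ℝ → ℝ → ℝ) → ℝ → ℝ → ℝ)
    (hT : ∀ g b x, T g b x =
      (x ^ b * f x)⁻¹ * ∫ y in Ioo (0:ℝ) x, g b y * y ^ (b - 1) * f y)
    (Sop : (ℝ → ℝ → ℝ) → ℝ → ℝ → ℝ)
    (hSop : ∀ g b x, Sop g b x = deriv (fun c => g c x) b + g b x * Real.log x)
    (L : ℝ → ℝ → ℝ)
    (hL : ∀ b x, L b x =
      T (fun c y => deriv (fun c' => Real.log (Mf f c')) c - Real.log y) b x)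
    (Dt : (ℝ → ℝ → ℝ) → ℝ → ℝ → ℝ)
    (hDt : ∀ G b x, Dt G b x =
      deriv (fun c => G c x) b + x * L b x * deriv (fun y => G b y) x)
    (h : ℝ → ℝ → ℝ) (hsm : ContDiff ℝ (⊤ : ℕ∞) (Function.uncurry h)) :
    ∀ a ∈ I, ∀ x ∈ S,
      Dt (T h) a x = T (Sop h) a x
        - ((a + x * deriv f x / f x) * L a x + Real.log x) * T h a x
        + h a x * L a x := by
  intro a haI x hxS
  obtain ⟨hx, hfx⟩ := (hSupp x).1 hxS
  have hxne : x ≠ 0 := hx.ne'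
  have hfd : DifferentiableAt ℝ f x :=
    ((hfs.differentiableOn (by simp)) x hxS).differentiableAt (hS.mem_nhds hxS)
  have hxapos : (0:ℝ) < x ^ a := Real.rpow_pos_of_pos hx a
  have hu : x ^ a * f x ≠ 0 := mul_ne_zero hxapos.ne' hfx
  have hcont_h : Continuous (Function.uncurry h) := hsm.continuous
  -- partial derivative of h in the first variable
  set h₁ : ℝ → ℝ → ℝ := fun b y => fderiv ℝ (Function.uncurry h) (b, y) (1, 0) with hh₁def
  have hcont_h₁ : Continuous (fun p : ℝ × ℝ => h₁ p.1 p.2) :=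
    (hsm.continuous_fderiv (by simp)).clm_apply continuous_const
  have hdh : ∀ b y, HasDerivAt (fun c => h c y) (h₁ b y) b := by
    intro b y
    have hf2 : HasDerivAt (fun c : ℝ => (c, y)) ((1:ℝ), (0:ℝ)) b :=
      (hasDerivAt_id b).prodMk (hasDerivAt_const b y)
    have hf1 : HasFDerivAt (Function.uncurry h) (fderiv ℝ (Function.uncurry h) (b, y)) (b, y) :=
      (hsm.differentiable (by simp) (b, y)).hasFDerivAt
    exact hf1.comp_hasDerivAt b hf2
  -- choose ε
  obtain ⟨ε, hε, hball⟩ := Metric.isOpen_iff.1 hI a haI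
  have hpI : a - ε/2 ∈ I := by
    apply hball
    rw [Metric.mem_ball, Real.dist_eq, abs_lt]
    constructor <;> linarith
  have hqI : a + ε/2 ∈ I := by
    apply hball
    rw [Metric.mem_ball, Real.dist_eq, abs_lt]
    constructor <;> linarith
  -- uniform bounds for h and h₁ on a compact box
  have hKcomp : IsCompact (Icc (a-ε) (a+ε) ×ˢ Icc 0 x) := isCompact_Icc.prod isCompact_Icc
  obtain ⟨C₁, hC₁⟩ := hKcomp.exists_bound_of_continuousOn hcont_h.continuousOn
  obtain ⟨C₂, hC₂⟩ := hKcomp.exists_bound_of_continuousOn hcont_h₁.continuousOn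
  set C : ℝ := |C₁| + |C₂| + 1 with hCdef
  have hCpos : (0:ℝ) < C := by positivity
  have hbound_h : ∀ b ∈ Icc (a-ε) (a+ε), ∀ y ∈ Icc (0:ℝ) x, |h b y| ≤ C := by
    intro b hb y hy
    have := hC₁ (b, y) (mem_prod.2 ⟨hb, hy⟩)
    rw [Real.norm_eq_abs] at this
    have := le_abs_self C₁
    calc |h b y| ≤ C₁ := by simpa using hC₁ (b, y) (mem_prod.2 ⟨hb, hy⟩)
    _ ≤ C := by have := le_abs_self C₁; have := abs_nonneg C₂; simp [hCdef]; linarith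
  have hbound_h₁ : ∀ b ∈ Icc (a-ε) (a+ε), ∀ y ∈ Icc (0:ℝ) x, |h₁ b y| ≤ C := by
    intro b hb y hy
    calc |h₁ b y| ≤ C₂ := by simpa using hC₂ (b, y) (mem_prod.2 ⟨hb, hy⟩)
    _ ≤ C := by have := le_abs_self C₂; have := abs_nonneg C₁; simp [hCdef]; linarith
  have hIooSub : Ioo (0:ℝ) x ⊆ Ioi 0 := Ioo_subset_Ioi_self
  have hmeasIoo : MeasurableSet (Ioo (0:ℝ) x) := measurableSet_Ioo
  -- measurability of f on (0, x)
  have hφ : IntegrableOn (fun y => y ^ (a-1) * f y) (Ioo 0 x) :=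
    (hInt a haI).mono_set hIooSub
  have hfm : AEStronglyMeasurable f (volume.restrict (Ioo 0 x)) := by
    have h2 : AEStronglyMeasurable (fun y : ℝ => y ^ (1-a)) (volume.restrict (Ioo 0 x)) := by
      refine ContinuousOn.aestronglyMeasurable (fun y hy => ?_) hmeasIoo
      exact (Real.continuousAt_rpow_const y (1-a) (Or.inl hy.1.ne')).continuousWithinAt
    refine (h2.mul hφ.aestronglyMeasurable).congr ?_
    filter_upwards [ae_restrict_mem hmeasIoo] with y hy
    have hone : y ^ (1-a) * y ^ (a-1) = 1 := by
      rw [← Real.rpow_add hy.1]; norm_num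
    show y ^ (1-a) * (y ^ (a-1) * f y) = f y
    rw [← mul_assoc, hone, one_mul]
  have hcont_ha : Continuous (fun y => h a y) :=
    hcont_h.comp (continuous_const.prodMk continuous_id)
  -- integrability of the main integrand on Ioc (0, x]
  have hgIoc : IntegrableOn (fun y => h a y * y ^ (a-1) * f y) (Ioc 0 x) := by
    have hφc : IntegrableOn (fun y => y ^ (a-1) * f y) (Ioc 0 x) :=
      (hInt a haI).mono_set Ioc_subset_Ioi_self
    have hb : ∀ᵐ y ∂(volume.restrict (Ioc (0:ℝ) x)), ‖h a y‖ ≤ C := by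
      filter_upwards [ae_restrict_mem measurableSet_Ioc] with y hy
      rw [Real.norm_eq_abs]
      exact hbound_h a (by constructor <;> linarith) y ⟨hy.1.le, hy.2⟩
    have := hφc.bdd_mul hcont_ha.aestronglyMeasurable hb
    exact this.congr (ae_of_all _ fun y => by ring)
  have hgIoo : IntegrableOn (fun y => h a y * y ^ (a-1) * f y) (Ioo 0 x) :=
    hgIoc.mono_set Ioo_subset_Ioc_self
  -- derivative in a, via differentiation under the integral sign
  have hder_a : HasDerivAt (fun b => ∫ y in Ioo (0:ℝ) x, h b y * y ^ (b-1) * f y)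
      (∫ y in Ioo (0:ℝ) x, (h₁ a y + h a y * Real.log y) * y ^ (a-1) * f y) a := by
    have hε4 : (0:ℝ) < ε/4 := by linarith
    have main := hasDerivAt_integral_of_dominated_loc_of_deriv_le
      (μ := volume.restrict (Ioo (0:ℝ) x))
      (F := fun b y => h b y * y ^ (b-1) * f y)
      (F' := fun b y => (h₁ b y + h b y * Real.log y) * y ^ (b-1) * f y)
      (x₀ := a)
      (bound := fun y => (C * (1 + 8/ε)) * (y ^ (a - ε/2 - 1) * f y + y ^ (a + ε/2 - 1) * f y))
      (Metric.ball_mem_nhds a hε4) ?_ ?_ ?_ ?_ ?_ ?_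
    · exact main.2
    · -- measurability of F b for b near a
      refine Filter.Eventually.of_forall fun b => ?_
      have hc : ContinuousOn (fun y : ℝ => h b y * y ^ (b-1)) (Ioo 0 x) := by
        apply ContinuousOn.mul
          ((hcont_h.comp (continuous_const.prodMk continuous_id)).continuousOn)
        intro y hy
        exact (Real.continuousAt_rpow_const y (b-1) (Or.inl hy.1.ne')).continuousWithinAt
      exact (hc.aestronglyMeasurable hmeasIoo).mul hfm
    · exact hgIoo
    · -- measurability of F' a
      have hc : ContinuousOn (fun y : ℝ => h₁ a y + h a y * Real.log y) (Ioo 0 x) := by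
        apply ContinuousOn.add
          ((hcont_h₁.comp (continuous_const.prodMk continuous_id)).continuousOn)
        exact hcont_ha.continuousOn.mul (fun y hy => (Real.continuousAt_log hy.1.ne').continuousWithinAt)
      have hc2 : ContinuousOn (fun y : ℝ => (h₁ a y + h a y * Real.log y) * y ^ (a-1)) (Ioo 0 x) := by
        apply hc.mul
        intro y hy
        exact (Real.continuousAt_rpow_const y (a-1) (Or.inl hy.1.ne')).continuousWithinAt
      exact (hc2.aestronglyMeasurable hmeasIoo).mul hfm
    · -- the bound
      filter_upwards [ae_restrict_mem hmeasIoo] with y hy b hb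
      have hy0 : (0:ℝ) < y := hy.1
      have hyx : y < x := hy.2
      have hfy : (0:ℝ) ≤ f y := hf0 y hy.1
      rw [Metric.mem_ball, Real.dist_eq, abs_lt] at hb
      have hbIcc : b ∈ Icc (a-ε) (a+ε) := by constructor <;> linarith
      have hyIcc : y ∈ Icc (0:ℝ) x := ⟨hy0.le, hyx.le⟩
      have hA : |h₁ b y| ≤ C := hbound_h₁ b hbIcc y hyIcc
      have hB : |h b y| ≤ C := hbound_h b hbIcc y hyIcc
      have hrpos : (0:ℝ) < y ^ (b-1) := Real.rpow_pos_of_pos hy0 _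
      have r1 : y ^ (b-1) ≤ y ^ (a - ε/2 - 1) + y ^ (a + ε/2 - 1) :=
        rpow_le_add' hy0 (by linarith) (by linarith)
      have r2 : |Real.log y| * (ε/4) ≤ y ^ (ε/4) + y ^ (-(ε/4)) := abs_log_mul_le' hy0 hε4
      have r3 : y ^ (ε/4) * y ^ (b-1) = y ^ (b - 1 + ε/4) := by
        rw [← Real.rpow_add hy0]; ring_nf
      have r3' : y ^ (-(ε/4)) * y ^ (b-1) = y ^ (b - 1 - ε/4) := by
        rw [← Real.rpow_add hy0]; ring_nf
      have r4 : y ^ (b - 1 + ε/4) ≤ y ^ (a - ε/2 - 1) + y ^ (a + ε/2 - 1) :=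
        rpow_le_add' hy0 (by linarith) (by linarith)
      have r4' : y ^ (b - 1 - ε/4) ≤ y ^ (a - ε/2 - 1) + y ^ (a + ε/2 - 1) :=
        rpow_le_add' hy0 (by linarith) (by linarith)
      have rlog : |Real.log y| * y ^ (b-1) ≤
          (8/ε) * (y ^ (a - ε/2 - 1) + y ^ (a + ε/2 - 1)) := by
        have hineq : |Real.log y| * (ε/4) * y ^ (b-1) ≤
            (y ^ (ε/4) + y ^ (-(ε/4))) * y ^ (b-1) :=
          mul_le_mul_of_nonneg_right r2 hrpos.le
        rw [add_mul, r3, r3'] at hineq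
        have h8 : |Real.log y| * (ε/4) * y ^ (b-1) ≤
            2 * (y ^ (a - ε/2 - 1) + y ^ (a + ε/2 - 1)) := by linarith
        have := mul_le_mul_of_nonneg_left h8 (le_of_lt (by positivity : (0:ℝ) < 4/ε))
        calc |Real.log y| * y ^ (b-1)
            = (4/ε) * (|Real.log y| * (ε/4) * y ^ (b-1)) := by field_simp
          _ ≤ (4/ε) * (2 * (y ^ (a - ε/2 - 1) + y ^ (a + ε/2 - 1))) := this
          _ = (8/ε) * (y ^ (a - ε/2 - 1) + y ^ (a + ε/2 - 1)) := by ring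
      have habs : |(h₁ b y + h b y * Real.log y) * y ^ (b-1) * f y|
          = |h₁ b y + h b y * Real.log y| * y ^ (b-1) * f y := by
        rw [abs_mul, abs_mul, abs_of_pos hrpos, abs_of_nonneg hfy]
      have htri : |h₁ b y + h b y * Real.log y| ≤ C * (1 + |Real.log y|) := by
        calc |h₁ b y + h b y * Real.log y| ≤ |h₁ b y| + |h b y| * |Real.log y| := by
              rw [← abs_mul]; exact abs_add_le _ _
          _ ≤ C + C * |Real.log y| := by
              have := mul_le_mul_of_nonneg_right hB (abs_nonneg (Real.log y))
              linarith
          _ = C * (1 + |Real.log y|) := by ring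
      rw [Real.norm_eq_abs, habs]
      have hstep : |h₁ b y + h b y * Real.log y| * y ^ (b-1) ≤
          C * (1 + 8/ε) * (y ^ (a - ε/2 - 1) + y ^ (a + ε/2 - 1)) := by
        calc |h₁ b y + h b y * Real.log y| * y ^ (b-1)
            ≤ C * (1 + |Real.log y|) * y ^ (b-1) :=
              mul_le_mul_of_nonneg_right htri hrpos.le
          _ = C * (y ^ (b-1) + |Real.log y| * y ^ (b-1)) := by ring
          _ ≤ C * ((y ^ (a - ε/2 - 1) + y ^ (a + ε/2 - 1))
                + (8/ε) * (y ^ (a - ε/2 - 1) + y ^ (a + ε/2 - 1))) := by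
              apply mul_le_mul_of_nonneg_left _ hCpos.le
              linarith
          _ = C * (1 + 8/ε) * (y ^ (a - ε/2 - 1) + y ^ (a + ε/2 - 1)) := by ring
      calc |h₁ b y + h b y * Real.log y| * y ^ (b-1) * f y
          ≤ C * (1 + 8/ε) * (y ^ (a - ε/2 - 1) + y ^ (a + ε/2 - 1)) * f y :=
            mul_le_mul_of_nonneg_right hstep hfy
        _ = C * (1 + 8/ε) * (y ^ (a - ε/2 - 1) * f y + y ^ (a + ε/2 - 1) * f y) := by ring
    · -- integrability of the bound
      have h1 : IntegrableOn (fun y => y ^ (a - ε/2 - 1) * f y) (Ioo 0 x) :=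
        (hInt _ hpI).mono_set hIooSub
      have h2 : IntegrableOn (fun y => y ^ (a + ε/2 - 1) * f y) (Ioo 0 x) :=
        (hInt _ hqI).mono_set hIooSub
      exact ((h1.add h2).const_mul _)
    · -- differentiability in b
      filter_upwards [ae_restrict_mem hmeasIoo] with y hy b _
      have hy0 : (0:ℝ) < y := hy.1
      have d1 : HasDerivAt (fun c => h c y) (h₁ b y) b := hdh b y
      have d2 : HasDerivAt (fun c : ℝ => y ^ (c-1)) (y ^ (b-1) * Real.log y) b := by
        have e1 : HasDerivAt (fun s : ℝ => y ^ s) (y ^ (b-1) * Real.log y) (b-1) :=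
          (Real.hasStrictDerivAt_const_rpow hy0 (b-1)).hasDerivAt
        have e2 : HasDerivAt (fun c : ℝ => c - 1) 1 b := (hasDerivAt_id b).sub_const 1
        have e3 := e1.comp b e2
        rw [mul_one] at e3
        exact e3
      have d3 := (d1.mul d2).mul_const (f y)
      refine d3.congr_deriv ?_
      ring
  -- derivative in b of (x^b * f x)⁻¹
  have hder_u : HasDerivAt (fun b => (x ^ b * f x)⁻¹)
      (-(x ^ a * Real.log x * f x) / (x ^ a * f x)^2) a := by
    have d1 : HasDerivAt (fun b : ℝ => x ^ b) (x ^ a * Real.log x) a :=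
      (Real.hasStrictDerivAt_const_rpow hx a).hasDerivAt
    exact (d1.mul_const (f x)).inv hu
  have hTa : HasDerivAt (fun b => T h b x)
      (-(x ^ a * Real.log x * f x) / (x ^ a * f x)^2
          * (∫ y in Ioo (0:ℝ) x, h a y * y ^ (a-1) * f y)
        + (x ^ a * f x)⁻¹
          * (∫ y in Ioo (0:ℝ) x, (h₁ a y + h a y * Real.log y) * y ^ (a-1) * f y)) a := by
    have heq : (fun b => T h b x)
        = fun b => (x ^ b * f x)⁻¹ * ∫ y in Ioo (0:ℝ) x, h b y * y ^ (b-1) * f y :=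
      funext fun b => hT h b x
    rw [heq]
    exact hder_u.mul hder_a
  -- derivative in x : FTC part
  have hii : IntervalIntegrable (fun y => h a y * y ^ (a-1) * f y) volume 0 x := by
    rw [intervalIntegrable_iff, uIoc_of_le hx.le]
    exact hgIoc
  have hgcontS : ContinuousOn (fun y => h a y * y ^ (a-1) * f y) S := by
    apply ContinuousOn.mul _ hfs.continuousOn
    apply ContinuousOn.mul hcont_ha.continuousOn
    intro y hy
    exact (Real.continuousAt_rpow_const y (a-1)
      (Or.inl (ne_of_gt (hSsub hy)))).continuousWithinAt
  have hsmf : StronglyMeasurableAtFilter (fun y => h a y * y ^ (a-1) * f y) (𝓝 x) :=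
    ⟨S, hS.mem_nhds hxS, hgcontS.aestronglyMeasurable hS.measurableSet⟩
  have hgca : ContinuousAt (fun y => h a y * y ^ (a-1) * f y) x :=
    hgcontS.continuousAt (hS.mem_nhds hxS)
  have hFTC : HasDerivAt (fun t => ∫ y in (0:ℝ)..t, h a y * y ^ (a-1) * f y)
      (h a x * x ^ (a-1) * f x) x :=
    intervalIntegral.integral_hasDerivAt_right hii hsmf hgca
  have hΦ : HasDerivAt (fun t => ∫ y in Ioo (0:ℝ) t, h a y * y ^ (a-1) * f y)
      (h a x * x ^ (a-1) * f x) x := by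
    apply hFTC.congr_of_eventuallyEq
    filter_upwards [Ioi_mem_nhds hx] with t ht
    rw [intervalIntegral.integral_of_le (le_of_lt ht), integral_Ioc_eq_integral_Ioo]
  have hd_rpow : HasDerivAt (fun t : ℝ => t ^ a) (a * x ^ (a-1)) x :=
    Real.hasDerivAt_rpow_const (Or.inl hxne)
  have hdu2 : HasDerivAt (fun t => (t ^ a * f t)⁻¹)
      (-(a * x ^ (a-1) * f x + x ^ a * deriv f x) / (x ^ a * f x)^2) x :=
    (hd_rpow.mul hfd.hasDerivAt).inv hu
  have hTx : HasDerivAt (fun t => T h a t)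
      (-(a * x ^ (a-1) * f x + x ^ a * deriv f x) / (x ^ a * f x)^2
          * (∫ y in Ioo (0:ℝ) x, h a y * y ^ (a-1) * f y)
        + (x ^ a * f x)⁻¹ * (h a x * x ^ (a-1) * f x)) x := by
    have heq : (fun t => T h a t)
        = fun t => (t ^ a * f t)⁻¹ * ∫ y in Ioo (0:ℝ) t, h a y * y ^ (a-1) * f y :=
      funext fun t => hT h a t
    rw [heq]
    exact hdu2.mul hΦ
  -- assemble
  have hSopInt : (fun y => Sop h a y * y ^ (a-1) * f y)
      = fun y => (h₁ a y + h a y * Real.log y) * y ^ (a-1) * f y := by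
    funext y
    rw [hSop, (hdh a y).deriv]
  rw [hDt, hT (Sop h) a x, hT h a x, hTa.deriv, hTx.deriv, hSopInt]
  have hxa1 : x ^ (a-1) = x ^ a / x := by
    rw [Real.rpow_sub hx, Real.rpow_one]
  rw [hxa1]
  set X := x ^ a with hX
  set F1 := ∫ y in Ioo (0:ℝ) x, h a y * (x ^ a / x) * f y with hF1 -- dummy to avoid issue
  field_simp
  ring
end

section
/- Let f(x) = e^{-bx} for b > 0, a > 0, and let h be measurable with |h(a,y)| ≤ C(1 + |log y|^j). Then T(h)(a,x) := (x^a e^{-bx})^{-1} ∫₀^x h(a,y) y^{a-1} e^{-by} dy satisfies: for 0 < x ≤ 1, |T(h)(a,x)| ≤ C'(1 + |log x|^j) for some constant C' depending only on a, b, j, C. -/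
open MeasureTheory Set Real
open scoped Nat

/-! With `c = a / 2`, the weight `(1 + |log y| ^ j) * y ^ c` is almost increasing on `(0, 1]`:
in the variable `s = -log y` it reads `(1 + s ^ j) * exp (-c s)`, and the exponential absorbs the
polynomial growth of `s ^ j` up to a constant factor. So for `y ≤ x ≤ 1` the integrand is at most a
constant times `(1 + |log x| ^ j) * x ^ c * y ^ (c - 1)`, whose integral over `(0, x)` is
`(1 + |log x| ^ j) * x ^ a / c`; dividing by `x ^ a * exp (-b x) ≥ x ^ a * exp (-b)` gives the
bound. -/

lemma pow_mul_exp_neg_mul_le {c t : ℝ} (hc : 0 < c) (ht : 0 ≤ t) (j : ℕ) :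
    t ^ j * exp (-(c * t)) ≤ j ! / c ^ j := by
  have hexp : (c * t) ^ j / j ! ≤ exp (c * t) := Real.pow_div_factorial_le_exp _ (by positivity) j
  rw [div_le_iff₀ (by positivity), mul_pow] at hexp
  rw [le_div_iff₀ (by positivity), exp_neg]
  calc t ^ j * (exp (c * t))⁻¹ * c ^ j = (c ^ j * t ^ j) * (exp (c * t))⁻¹ := by ring
    _ ≤ exp (c * t) * j ! * (exp (c * t))⁻¹ := by gcongr
    _ = j ! := by field_simp

lemma one_add_pow_mul_exp_neg_mul_le {c r s : ℝ} (hc : 0 < c) (hr : 0 ≤ r) (hrs : r ≤ s) (j : ℕ) :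
    (1 + s ^ j) * exp (-(c * s)) ≤ 2 ^ j * (1 + j ! / c ^ j) * ((1 + r ^ j) * exp (-(c * r))) := by
  set L := s - r
  have hL : 0 ≤ L := sub_nonneg.mpr hrs
  have hsplit : exp (-(c * s)) = exp (-(c * r)) * exp (-(c * L)) := by
    rw [← exp_add]; simp only [L]; ring_nf
  have hpow : 1 + s ^ j ≤ 2 ^ j * ((1 + r ^ j) * (1 + L ^ j)) := by
    have hadd : s ^ j ≤ 2 ^ (j - 1) * (r ^ j + L ^ j) := by
      simpa [L] using add_pow_le hr hL j
    have h2 : (2 : ℝ) ^ (j - 1) ≤ 2 ^ j := pow_le_pow_right₀ one_le_two (j.sub_le 1)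
    have h1 : (1 : ℝ) ≤ 2 ^ j := one_le_pow₀ one_le_two
    have hrj := pow_nonneg hr j
    have hLj := pow_nonneg hL j
    nlinarith [mul_nonneg hrj hLj]
  have htail : (1 + L ^ j) * exp (-(c * L)) ≤ 1 + j ! / c ^ j := by
    have : exp (-(c * L)) ≤ 1 := exp_le_one_iff.mpr (by nlinarith)
    linarith [pow_mul_exp_neg_mul_le hc hL j]
  calc (1 + s ^ j) * exp (-(c * s))
      ≤ 2 ^ j * ((1 + r ^ j) * (1 + L ^ j)) * (exp (-(c * r)) * exp (-(c * L))) := by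
        rw [hsplit]; gcongr
    _ = 2 ^ j * ((1 + L ^ j) * exp (-(c * L))) * ((1 + r ^ j) * exp (-(c * r))) := by ring
    _ ≤ 2 ^ j * (1 + j ! / c ^ j) * ((1 + r ^ j) * exp (-(c * r))) := by gcongr

lemma one_add_abs_log_pow_mul_rpow_le {c x y : ℝ} (hc : 0 < c) (hy : 0 < y) (hyx : y ≤ x)
    (hx : x ≤ 1) (j : ℕ) :
    (1 + |log y| ^ j) * y ^ c ≤ 2 ^ j * (1 + j ! / c ^ j) * ((1 + |log x| ^ j) * x ^ c) := by
  have hlogx : log x ≤ 0 := log_nonpos (hy.trans_le hyx).le hx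
  have hlog : log y ≤ log x := log_le_log hy hyx
  have key := one_add_pow_mul_exp_neg_mul_le hc (neg_nonneg.mpr hlogx) (neg_le_neg hlog) j
  rw [abs_of_nonpos hlogx, abs_of_nonpos (hlog.trans hlogx), rpow_def_of_pos hy,
    rpow_def_of_pos (hy.trans_le hyx)]
  simp only [show ∀ z, -(c * -z) = z * c from fun z => by ring] at key
  exact key

lemma norm_setIntegral_Ioo_zero_le_of_le_rpow {f : ℝ → ℝ} {c K x : ℝ} (hc : 0 < c) (hx : 0 < x)
    (hf : ∀ y ∈ Ioo 0 x, ‖f y‖ ≤ K * y ^ (c - 1)) :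
    ‖∫ y in Ioo 0 x, f y‖ ≤ K * x ^ c / c := by
  have hint : IntegrableOn (fun y : ℝ => y ^ (c - 1)) (Ioo 0 x) := by
    rw [← intervalIntegrable_iff_integrableOn_Ioo_of_le hx.le]
    exact intervalIntegral.intervalIntegrable_rpow' (by linarith)
  have hval : ∫ y in Ioo 0 x, y ^ (c - 1) = x ^ c / c := by
    rw [← integral_Ioc_eq_integral_Ioo, ← intervalIntegral.integral_of_le hx.le,
      integral_rpow (Or.inl (by linarith)), sub_add_cancel, zero_rpow hc.ne', sub_zero]
  calc ‖∫ y in Ioo 0 x, f y‖ ≤ ∫ y in Ioo 0 x, K * y ^ (c - 1) :=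
        norm_integral_le_of_norm_le (hint.const_mul K) (ae_restrict_of_forall_mem measurableSet_Ioo hf)
    _ = K * x ^ c / c := by rw [integral_const_mul, hval, mul_div_assoc]

lemma norm_mul_rpow_mul_exp_neg_le {a b C v x y : ℝ} (ha : 0 < a) (hb : 0 ≤ b) (hC : 0 ≤ C)
    (j : ℕ) (hv : |v| ≤ C * (1 + |log y| ^ j)) (hy : 0 < y) (hyx : y ≤ x) (hx : x ≤ 1) :
    ‖v * y ^ (a - 1) * exp (-b * y)‖ ≤
      C * (2 ^ j * (1 + j ! / (a / 2) ^ j)) * ((1 + |log x| ^ j) * x ^ (a / 2)) *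
        y ^ (a / 2 - 1) := by
  have hexp : exp (-b * y) ≤ 1 := exp_le_one_iff.mpr (by nlinarith)
  have hsplit : y ^ (a - 1) = y ^ (a / 2) * y ^ (a / 2 - 1) := by
    rw [← rpow_add hy]; ring_nf
  have hweight := one_add_abs_log_pow_mul_rpow_le (half_pos ha) hy hyx hx j
  rw [Real.norm_eq_abs, abs_mul, abs_mul, abs_of_pos (rpow_pos_of_pos hy _),
    abs_of_pos (exp_pos _)]
  calc |v| * y ^ (a - 1) * exp (-b * y) ≤ C * (1 + |log y| ^ j) * y ^ (a - 1) * 1 := by gcongr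
    _ = C * ((1 + |log y| ^ j) * y ^ (a / 2)) * y ^ (a / 2 - 1) := by rw [hsplit]; ring
    _ ≤ C * (2 ^ j * (1 + j ! / (a / 2) ^ j) * ((1 + |log x| ^ j) * x ^ (a / 2))) *
          y ^ (a / 2 - 1) := by gcongr
    _ = _ := by ring

theorem stmt_18_general
    (b : ℝ) (hb : 0 < b) (a : ℝ) (ha : 0 < a) (j : ℕ)
    (C : ℝ) (hC : 0 ≤ C)
    (h : ℝ → ℝ → ℝ)
    (hbd : ∀ y ∈ Ioi (0:ℝ), |h a y| ≤ C * (1 + |Real.log y| ^ j))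
    (T : ℝ → ℝ)
    (hT : ∀ x, T x = (x ^ a * Real.exp (-b * x))⁻¹ *
      ∫ y in Ioo (0:ℝ) x, h a y * y ^ (a - 1) * Real.exp (-b * y)) :
    ∃ C' > 0, ∀ x : ℝ, 0 < x → x ≤ 1 → |T x| ≤ C' * (1 + |Real.log x| ^ j) := by
  set M := 2 ^ j * (1 + j ! / (a / 2) ^ j)
  refine ⟨C * M * exp b / (a / 2) + 1, by positivity, fun x hx hx1 => ?_⟩
  set w := 1 + |log x| ^ j
  have hint := norm_setIntegral_Ioo_zero_le_of_le_rpow (half_pos ha) hx fun y hy =>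
    norm_mul_rpow_mul_exp_neg_le ha hb.le hC j (hbd y hy.1) hy.1 hy.2.le hx1
  have hxa : x ^ (a / 2) * x ^ (a / 2) = x ^ a := by rw [← rpow_add hx, add_halves]
  have hexp : (exp (-b * x))⁻¹ ≤ exp b := by
    rw [← exp_neg]; exact exp_le_exp.mpr (by nlinarith)
  calc |T x| = (exp (-b * x))⁻¹ * (x ^ a)⁻¹ *
        ‖∫ y in Ioo 0 x, h a y * y ^ (a - 1) * exp (-b * y)‖ := by
        rw [hT, abs_mul, abs_of_pos (by positivity), mul_inv, mul_comm (x ^ a)⁻¹, norm_eq_abs]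
    _ ≤ exp b * (x ^ a)⁻¹ * (C * M * (w * x ^ (a / 2)) * x ^ (a / 2) / (a / 2)) := by gcongr
    _ = C * M * exp b / (a / 2) * w := by
        rw [← hxa]; field_simp
    _ ≤ (C * M * exp b / (a / 2) + 1) * w := by gcongr; linarith

theorem stmt_18
    (b : ℝ) (hb : 0 < b) (a : ℝ) (ha : 0 < a) (j : ℕ)
    (C : ℝ) (hC : 0 ≤ C)
    (h : ℝ → ℝ → ℝ) (hmeas : Measurable (Function.uncurry h))
    (hbd : ∀ y ∈ Ioi (0:ℝ), |h a y| ≤ C * (1 + |Real.log y| ^ j))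
    (T : ℝ → ℝ)
    (hT : ∀ x, T x = (x ^ a * Real.exp (-b * x))⁻¹ *
      ∫ y in Ioo (0:ℝ) x, h a y * y ^ (a - 1) * Real.exp (-b * y)) :
    ∃ C' > 0, ∀ x : ℝ, 0 < x → x ≤ 1 → |T x| ≤ C' * (1 + |Real.log x| ^ j) :=
  stmt_18_general b hb a ha j C hC h hbd T hT
end
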